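/- arXiv:2509.16142 — 4 statements merged into one kernel-verified Lean document; each statement's English description precedes it below -/
import Mathlib

section
/- Let F be a finite field with q elements, q odd, A = F[T], m ∈ A monic of odd degree M ≥ 3, and M' = (M−1)/2. Let χ : A → ℤ be completely multiplicative with χ(f) = 0 whenever f is not coprime to m and χ(f)² = 1 whenever f is coprime to m. Set c(n) = ∑_{f monic, deg f = n} χ(f) and b^μ(n) = ∑_{f monic, deg f = n} μ(f)χ(f). Suppose there are pairwise distinct θ_1, …, θ_{M'} ∈ (0, π) such that c(n) = 0 for all n ≥ M and, as polynomials with real coefficients, ∑_{n=0}^{M−1} c(n) X^n = ∏_{j=1}^{M'} (1 − 2√q·cos(θ_j)·X + q X²). Then there exist real numbers γ_1, …, γ_{M'} and φ_1, …, φ_{M'} such that for every n ≥ 1, b^μ(n) = q^{n/2} ∑_{j=1}^{M'} γ_j sin(nθ_j + φ_j). -/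
open Polynomial
open scoped Classical

/-- The Möbius function on `F[T]`: `(-1)^k` for a squarefree polynomial with `k`
irreducible factors, and `0` for non-squarefree polynomials. -/
noncomputable def polyMoebius {F : Type*} [Field F] (f : F[X]) : ℤ :=
  if Squarefree f then (-1) ^ Multiset.card (UniqueFactorizationMonoid.factors f) else 0

/-- The Liouville function on `F[T]`: `(-1)^{Ω(f)}` where `Ω(f)` is the number of
irreducible factors of `f` counted with multiplicity. -/
noncomputable def polyLiouville {F : Type*} [Field F] (f : F[X]) : ℤ :=
  (-1) ^ Multiset.card (UniqueFactorizationMonoid.factors f)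

/-- The sum of a weight `w` over all monic polynomials of degree `n` in `F[T]`. -/
noncomputable def coeffSum {F : Type*} [Field F] (w : F[X] → ℤ) (n : ℕ) : ℤ :=
  ∑ᶠ f ∈ {f : F[X] | f.Monic ∧ f.natDegree = n}, w f

namespace MuBiasAux

open UniqueFactorizationMonoid Finset

variable {F : Type*} [Field F] [Fintype F]

lemma finite_degle (n : ℕ) : {f : F[X] | f.natDegree ≤ n}.Finite := by
  have : Finite {f : F[X] // f.natDegree ≤ n} := by
    refine Finite.of_injective (fun f => (fun i : Fin (n + 1) => (f : F[X]).coeff i)) ?_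
    intro f g h
    ext1
    ext i
    by_cases hi : i ≤ n
    · simpa using congrFun h ⟨i, Nat.lt_succ_of_le hi⟩
    · rw [Polynomial.coeff_eq_zero_of_natDegree_lt (lt_of_le_of_lt f.2 (by omega)),
        Polynomial.coeff_eq_zero_of_natDegree_lt (lt_of_le_of_lt g.2 (by omega))]
  exact Set.finite_coe_iff.mp this

lemma finite_mdeg (n : ℕ) : {f : F[X] | f.Monic ∧ f.natDegree = n}.Finite :=
  (finite_degle n).subset (fun _ hf => le_of_eq hf.2)

noncomputable def Mn (F : Type*) [Field F] [Fintype F] (n : ℕ) : Finset F[X] :=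
  (finite_mdeg (F := F) n).toFinset

lemma mem_Mn {n : ℕ} {f : F[X]} : f ∈ Mn F n ↔ f.Monic ∧ f.natDegree = n := by
  simp [Mn]

lemma coeffSum_eq (w : F[X] → ℤ) (n : ℕ) : coeffSum w n = ∑ f ∈ Mn F n, w f := by
  rw [coeffSum, ← finsum_mem_coe_finset]
  congr 1
  simp [Mn]

lemma Mn_zero : Mn F 0 = {1} := by
  ext f
  simp only [mem_Mn, Finset.mem_singleton]
  constructor
  · rintro ⟨hm, hd⟩
    exact (hm.natDegree_eq_zero).mp hd
  · rintro rfl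
    exact ⟨monic_one, natDegree_one⟩

noncomputable def divM (f : F[X]) : Finset F[X] :=
  ((Finset.range (f.natDegree + 1)).biUnion (fun k => Mn F k)).filter (· ∣ f)

lemma mem_divM {f d : F[X]} (hf : f ≠ 0) : d ∈ divM f ↔ d.Monic ∧ d ∣ f := by
  simp only [divM, Finset.mem_filter, Finset.mem_biUnion, Finset.mem_range, mem_Mn]
  constructor
  · rintro ⟨⟨k, _, hm, _⟩, hd⟩
    exact ⟨hm, hd⟩
  · rintro ⟨hm, hd⟩
    exact ⟨⟨d.natDegree, Nat.lt_succ_of_le (Polynomial.natDegree_le_of_dvd hd hf), hm, rfl⟩, hd⟩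

lemma card_factors_eq (f : F[X]) :
    Multiset.card (UniqueFactorizationMonoid.factors f)
      = Multiset.card (UniqueFactorizationMonoid.normalizedFactors f) := by
  rw [UniqueFactorizationMonoid.normalizedFactors, Multiset.card_map]

lemma polyMoebius_of_squarefree {f : F[X]} (h : Squarefree f) :
    polyMoebius f = (-1) ^ Multiset.card (UniqueFactorizationMonoid.normalizedFactors f) := by
  rw [polyMoebius, if_pos h, card_factors_eq]

lemma polyMoebius_of_not_squarefree {f : F[X]} (h : ¬ Squarefree f) : polyMoebius f = 0 :=
  if_neg h

lemma polyMoebius_one : polyMoebius (1 : F[X]) = 1 := by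
  rw [polyMoebius_of_squarefree squarefree_one,
    UniqueFactorizationMonoid.normalizedFactors_one]
  simp

set_option linter.unusedSectionVars false

lemma sum_polyMoebius_divM (f : F[X]) (hf : f.Monic) (h0 : f.natDegree ≠ 0) :
    ∑ d ∈ divM f, polyMoebius d = 0 := by
  have mem_divM : ∀ {f d : F[X]}, f ≠ 0 → (d ∈ divM f ↔ d.Monic ∧ d ∣ f) :=
    fun {f d} h => MuBiasAux.mem_divM h
  have polyMoebius_of_squarefree : ∀ {f : F[X]}, Squarefree f →
      polyMoebius f = (-1) ^ Multiset.card (normalizedFactors f) :=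
    fun {f} h => MuBiasAux.polyMoebius_of_squarefree h
  have polyMoebius_of_not_squarefree : ∀ {f : F[X]}, ¬ Squarefree f → polyMoebius f = 0 :=
    fun {f} h => MuBiasAux.polyMoebius_of_not_squarefree h
  have hf0 : f ≠ 0 := hf.ne_zero
  have hfu : ¬ IsUnit f := fun h => h0 (Polynomial.natDegree_eq_zero_of_isUnit h)
  set s : Finset F[X] := (normalizedFactors f).toFinset with hs
  have hmem_s : ∀ {p}, p ∈ s ↔ p ∈ normalizedFactors f := fun {p} => Multiset.mem_toFinset
  have hs_ne : s.Nonempty := by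
    obtain ⟨p, hp⟩ := exists_mem_normalizedFactors hf0 hfu
    exact ⟨p, hmem_s.mpr hp⟩
  have hprime : ∀ p ∈ s, Prime p := fun p hp => prime_of_normalized_factor p (hmem_s.mp hp)
  have hnorm : ∀ p ∈ s, normalize p = p := fun p hp =>
    normalize_normalized_factor p (hmem_s.mp hp)
  have hmonic : ∀ p ∈ s, p.Monic := by
    intro p hp
    have := Polynomial.monic_normalize (p := p) (hprime p hp).ne_zero
    rwa [hnorm p hp] at this
  have hTprod : ∀ T : Finset F[X], (∏ p ∈ T, p) = T.val.prod := by
    intro T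
    rw [Finset.prod, Multiset.map_id']
  -- facts about products of subsets of s
  have hprod_nf : ∀ T ∈ s.powerset, normalizedFactors (∏ p ∈ T, p) = T.val := by
    intro T hT
    rw [Finset.mem_powerset] at hT
    rw [hTprod, normalizedFactors_prod_eq _ (fun a ha => (hprime a (hT ha)).irreducible),
      Multiset.map_congr rfl (fun a ha => hnorm a (hT ha)), Multiset.map_id']
  have hprod_ne : ∀ T ∈ s.powerset, (∏ p ∈ T, p) ≠ 0 := by
    intro T hT
    rw [Finset.mem_powerset] at hT
    exact Finset.prod_ne_zero_iff.mpr (fun a ha => (hprime a (hT ha)).ne_zero)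
  have hprod_sq : ∀ T ∈ s.powerset, Squarefree (∏ p ∈ T, p) := by
    intro T hT
    rw [squarefree_iff_nodup_normalizedFactors (hprod_ne T hT), hprod_nf T hT]
    exact T.nodup
  have hprod_dvd : ∀ T ∈ s.powerset, (∏ p ∈ T, p) ∣ f := by
    intro T hT
    rw [dvd_iff_normalizedFactors_le_normalizedFactors (hprod_ne T hT) hf0, hprod_nf T hT]
    rw [Multiset.le_iff_count]
    intro a
    by_cases ha : a ∈ T.val
    · rw [Multiset.count_eq_one_of_mem T.nodup ha]
      exact Multiset.one_le_count_iff_mem.mpr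
        (hmem_s.mp (Finset.mem_powerset.mp hT ha))
    · simp [Multiset.count_eq_zero_of_notMem ha]
  have hprod_monic : ∀ T ∈ s.powerset, (∏ p ∈ T, p).Monic := by
    intro T hT
    exact Polynomial.monic_prod_of_monic _ _
      (fun p hp => hmonic p (Finset.mem_powerset.mp hT hp))
  -- split sum on squarefree
  rw [← Finset.sum_filter_add_sum_filter_not (divM f) Squarefree]
  rw [Finset.sum_eq_zero (fun d hd =>
    polyMoebius_of_not_squarefree (Finset.mem_filter.mp hd).2), add_zero]
  -- the filtered set is the image of the powerset
  have himg : (divM f).filter Squarefree = s.powerset.image (fun T => ∏ p ∈ T, p) := by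
    ext d
    simp only [Finset.mem_filter, Finset.mem_image]
    constructor
    · rintro ⟨hd, hsq⟩
      obtain ⟨hdm, hdvd⟩ := (mem_divM hf0).mp hd
      have hd0 : d ≠ 0 := hdm.ne_zero
      have hTsub : (normalizedFactors d).toFinset ∈ s.powerset := by
        rw [Finset.mem_powerset]
        intro p hp
        rw [hmem_s]
        exact Multiset.mem_of_le
          ((dvd_iff_normalizedFactors_le_normalizedFactors hd0 hf0).mp hdvd)
          (Multiset.mem_toFinset.mp hp)
      refine ⟨(normalizedFactors d).toFinset, hTsub, ?_⟩
      have hnodup : (normalizedFactors d).Nodup :=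
        (squarefree_iff_nodup_normalizedFactors hd0).mp hsq
      have hval : ((normalizedFactors d).toFinset : Finset F[X]).val = normalizedFactors d := by
        rw [Multiset.toFinset_val, Multiset.dedup_eq_self.mpr hnodup]
      have hprodd : (∏ p ∈ (normalizedFactors d).toFinset, p)
          = (normalizedFactors d).prod := by rw [hTprod, hval]
      rw [hprodd]
      exact Polynomial.eq_of_monic_of_associated
        (by rw [← hprodd]; exact hprod_monic _ hTsub) hdm (prod_normalizedFactors hd0)
    · rintro ⟨T, hT, rfl⟩
      exact ⟨(mem_divM hf0).mpr ⟨hprod_monic T hT, hprod_dvd T hT⟩, hprod_sq T hT⟩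
  rw [himg]
  rw [Finset.sum_image (fun T hT T' hT' h => ?_)]
  · calc ∑ T ∈ s.powerset, polyMoebius (∏ p ∈ T, p)
        = ∑ T ∈ s.powerset, (-1 : ℤ) ^ T.card := by
          refine Finset.sum_congr rfl (fun T hT => ?_)
          rw [polyMoebius_of_squarefree (hprod_sq T hT), hprod_nf T hT]
          rfl
      _ = 0 := Finset.sum_powerset_neg_one_pow_card_of_nonempty hs_ne
  · have := hprod_nf T hT
    rw [h, hprod_nf T' hT'] at this
    exact Finset.val_injective this.symm

lemma conv (χ : F[X] → ℤ) (hχmul : ∀ f g, χ (f * g) = χ f * χ g)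
    (n : ℕ) (hn : 1 ≤ n) :
    ∑ k ∈ Finset.range (n + 1),
      coeffSum (fun f => polyMoebius f * χ f) k * coeffSum χ (n - k) = 0 := by
  simp_rw [coeffSum_eq]
  simp_rw [Finset.sum_mul_sum]
  have fold : ∀ k, (∑ d ∈ Mn F k, ∑ e ∈ Mn F (n - k), polyMoebius d * χ d * χ e)
      = ∑ p ∈ (Mn F k) ×ˢ (Mn F (n - k)), polyMoebius p.1 * χ p.1 * χ p.2 := by
    intro k
    rw [Finset.sum_product]
  simp_rw [fold]
  rw [Finset.sum_sigma']
  have key : ∑ x ∈ (Finset.range (n + 1)).sigma (fun k => (Mn F k) ×ˢ (Mn F (n - k))),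
        polyMoebius x.2.1 * χ x.2.1 * χ x.2.2
      = ∑ y ∈ (Mn F n).sigma (fun f => divM f), polyMoebius y.2 * χ y.1 := by
    refine Finset.sum_nbij' (fun x => ⟨x.2.1 * x.2.2, x.2.1⟩)
      (fun y => ⟨(y.2).natDegree, (y.2, y.1 / y.2)⟩) ?_ ?_ ?_ ?_ ?_
    · rintro ⟨k, d, e⟩ hx
      rw [Finset.mem_sigma, Finset.mem_product] at hx
      obtain ⟨hdm, hdd⟩ := mem_Mn.mp hx.2.1
      obtain ⟨hem, hed⟩ := mem_Mn.mp hx.2.2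
      have hk := Finset.mem_range.mp hx.1
      dsimp only at hdd hed hk ⊢
      have hmon : (d * e).Monic := hdm.mul hem
      rw [Finset.mem_sigma]
      refine ⟨mem_Mn.mpr ⟨hmon, ?_⟩, (mem_divM hmon.ne_zero).mpr ⟨hdm, dvd_mul_right d e⟩⟩
      rw [hdm.natDegree_mul hem, hdd, hed]
      omega
    · rintro ⟨f, d⟩ hy
      rw [Finset.mem_sigma] at hy
      obtain ⟨hfm, hfdeg⟩ := mem_Mn.mp hy.1
      obtain ⟨hdm, hdvd⟩ := (mem_divM hfm.ne_zero).mp hy.2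
      have hde : d * (f / d) = f := EuclideanDomain.mul_div_cancel' hdm.ne_zero hdvd
      have hem : (f / d).Monic := hdm.of_mul_monic_left (by rw [hde]; exact hfm)
      have hdeg : d.natDegree + (f / d).natDegree = n := by
        rw [← hdm.natDegree_mul hem, hde, hfdeg]
      simp only [Finset.mem_sigma, Finset.mem_product, Finset.mem_range]
      exact ⟨by omega, mem_Mn.mpr ⟨hdm, rfl⟩, mem_Mn.mpr ⟨hem, by omega⟩⟩
    · rintro ⟨k, d, e⟩ hx
      rw [Finset.mem_sigma, Finset.mem_product] at hx
      obtain ⟨hdm, hdd⟩ := mem_Mn.mp hx.2.1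
      dsimp only at hdd ⊢
      rw [mul_div_cancel_left₀ _ hdm.ne_zero, hdd]
    · rintro ⟨f, d⟩ hy
      rw [Finset.mem_sigma] at hy
      obtain ⟨hfm, hfdeg⟩ := mem_Mn.mp hy.1
      obtain ⟨hdm, hdvd⟩ := (mem_divM hfm.ne_zero).mp hy.2
      dsimp only
      rw [EuclideanDomain.mul_div_cancel' hdm.ne_zero hdvd]
    · rintro ⟨k, d, e⟩ hx
      dsimp only
      rw [hχmul]
      ring
  rw [key, Finset.sum_sigma]
  dsimp only
  refine Finset.sum_eq_zero (fun f hf => ?_)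
  obtain ⟨hfm, hfdeg⟩ := mem_Mn.mp hf
  rw [← Finset.sum_mul, sum_polyMoebius_divM f hfm (by omega), zero_mul]

end MuBiasAux

lemma geom_inv {β : ℂ} :
    ((1 - Polynomial.C β * Polynomial.X : ℂ[X]) : PowerSeries ℂ)
      * PowerSeries.mk (fun n => β ^ n) = 1 := by
  have hcoe : ((1 - Polynomial.C β * Polynomial.X : ℂ[X]) : PowerSeries ℂ)
      = 1 - PowerSeries.C β * PowerSeries.X := by
    push_cast
    ring
  rw [hcoe]
  ext n
  rw [sub_mul, one_mul, map_sub]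
  cases n with
  | zero => simp
  | succ n =>
      rw [mul_assoc, PowerSeries.coeff_C_mul, PowerSeries.coeff_succ_X_mul]
      simp [PowerSeries.coeff_mk, pow_succ, mul_comm]

lemma partial_fractions {ι : Type*} [Fintype ι] [DecidableEq ι] [Nonempty ι] (β : ι → ℂ)
    (h0 : ∀ r, β r ≠ 0) (hinj : Function.Injective β) (b : ℕ → ℂ)
    (hb : PowerSeries.mk b
        * ((∏ r, (1 - Polynomial.C (β r) * Polynomial.X) : ℂ[X]) : PowerSeries ℂ) = 1) :
    ∀ n, b n = ∑ r, (∏ s ∈ Finset.univ.erase r, (β r / (β r - β s))) * β r ^ n := by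
  set A : ι → ℂ := fun r => ∏ s ∈ Finset.univ.erase r, (β r / (β r - β s)) with hA
  have hsub : ∀ {r s : ι}, r ≠ s → β r - β s ≠ 0 :=
    fun {r s} h => sub_ne_zero_of_ne (fun he => h (hinj he))
  set Q : ℂ[X] := ∏ r, (1 - Polynomial.C (β r) * Polynomial.X) with hQ
  set E : PowerSeries ℂ := ∑ r, PowerSeries.C (A r) * PowerSeries.mk (fun n => β r ^ n)
    with hE
  -- R = 1
  set R : ℂ[X] := ∑ r, Polynomial.C (A r)
      * ∏ s ∈ Finset.univ.erase r, (1 - Polynomial.C (β s) * Polynomial.X) with hR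
  have hR1 : R = 1 := by
    have hdeg : (R - 1).natDegree < Fintype.card ι := by
      have h1 : ∀ r : ι, (Polynomial.C (A r)
          * ∏ s ∈ Finset.univ.erase r, (1 - Polynomial.C (β s) * Polynomial.X)).natDegree
          ≤ Fintype.card ι - 1 := by
        intro r
        refine (Polynomial.natDegree_C_mul_le _ _).trans ?_
        refine (Polynomial.natDegree_prod_le _ _).trans ?_
        calc ∑ s ∈ Finset.univ.erase r,
              (1 - Polynomial.C (β s) * Polynomial.X).natDegree
            ≤ ∑ s ∈ Finset.univ.erase r, 1 := by
              refine Finset.sum_le_sum (fun s _ => ?_)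
              refine (Polynomial.natDegree_sub_le _ _).trans ?_
              simp only [Polynomial.natDegree_one, max_le_iff]
              exact ⟨Nat.zero_le _, (Polynomial.natDegree_C_mul_le _ _).trans
                (le_of_eq Polynomial.natDegree_X)⟩
          _ = (Finset.univ.erase r).card := by simp
          _ = Fintype.card ι - 1 := by
              rw [Finset.card_erase_of_mem (Finset.mem_univ r), Finset.card_univ]
      have h2 : R.natDegree ≤ Fintype.card ι - 1 := by
        exact (Polynomial.natDegree_sum_le _ _).trans
          ((Finset.fold_max_le _).mpr ⟨Nat.zero_le _, fun r _ => h1 r⟩)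
      have h3 : (R - 1).natDegree ≤ Fintype.card ι - 1 := by
        refine (Polynomial.natDegree_sub_le _ _).trans ?_
        simpa using h2
      have hcard : 1 ≤ Fintype.card ι := Fintype.card_pos
      omega
    have heval : ∀ r : ι, (R - 1).eval (β r)⁻¹ = 0 := by
      intro r
      rw [Polynomial.eval_sub, Polynomial.eval_one, sub_eq_zero, hR]
      rw [Polynomial.eval_finset_sum]
      rw [Finset.sum_eq_single r]
      · rw [Polynomial.eval_mul, Polynomial.eval_C, Polynomial.eval_prod, hA]
        rw [← Finset.prod_mul_distrib]
        rw [Finset.prod_congr rfl (fun s hs => ?_), Finset.prod_const_one]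
        · have hrs : s ≠ r := (Finset.mem_erase.mp hs).1
          have hne1 := h0 r
          have hne2 : β r - β s ≠ 0 := hsub (Ne.symm hrs)
          have hstep : (1 - β s * (β r)⁻¹) = (β r - β s) / β r := by
            field_simp
          simp only [Polynomial.eval_sub, Polynomial.eval_one, Polynomial.eval_mul,
            Polynomial.eval_C, Polynomial.eval_X]
          rw [hstep, div_mul_div_comm, mul_comm (β r) (β r - β s),
            div_self (mul_ne_zero hne2 hne1)]
      · intro t _ htr
        rw [Polynomial.eval_mul, Polynomial.eval_prod]
        rw [Finset.prod_eq_zero (Finset.mem_erase.mpr ⟨(Ne.symm htr), Finset.mem_univ r⟩)]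
        · ring
        · simp only [Polynomial.eval_sub, Polynomial.eval_one, Polynomial.eval_mul,
            Polynomial.eval_C, Polynomial.eval_X]
          rw [mul_inv_cancel₀ (h0 r)]
          ring
      · intro h
        exact absurd (Finset.mem_univ r) h
    have hzero : R - 1 = 0 :=
      Polynomial.eq_zero_of_natDegree_lt_card_of_eval_eq_zero _
        (fun x y hxy => hinj (inv_injective hxy)) heval hdeg
    exact sub_eq_zero.mp hzero
  have hEQ : E * (Q : PowerSeries ℂ) = 1 := by
    rw [hE, Finset.sum_mul]
    have hterm : ∀ r : ι, (PowerSeries.C (A r) * PowerSeries.mk (fun n => β r ^ n))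
          * (Q : PowerSeries ℂ)
        = PowerSeries.C (A r) * ((∏ s ∈ Finset.univ.erase r,
            (1 - Polynomial.C (β s) * Polynomial.X) : ℂ[X]) : PowerSeries ℂ) := by
      intro r
      have hsplit : (Q : PowerSeries ℂ)
          = ((1 - Polynomial.C (β r) * Polynomial.X : ℂ[X]) : PowerSeries ℂ)
            * ((∏ s ∈ Finset.univ.erase r,
                (1 - Polynomial.C (β s) * Polynomial.X) : ℂ[X]) : PowerSeries ℂ) := by
        rw [hQ, ← Polynomial.coe_mul]
        exact congrArg (fun p : ℂ[X] => (p : PowerSeries ℂ))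
          (Finset.mul_prod_erase _ _ (Finset.mem_univ r)).symm
      rw [hsplit]
      calc (PowerSeries.C (A r) * PowerSeries.mk (fun n => β r ^ n))
            * (((1 - Polynomial.C (β r) * Polynomial.X : ℂ[X]) : PowerSeries ℂ)
              * ((∏ s ∈ Finset.univ.erase r,
                  (1 - Polynomial.C (β s) * Polynomial.X) : ℂ[X]) : PowerSeries ℂ))
          = PowerSeries.C (A r)
            * ((((1 - Polynomial.C (β r) * Polynomial.X : ℂ[X]) : PowerSeries ℂ)
                * PowerSeries.mk (fun n => β r ^ n))
              * ((∏ s ∈ Finset.univ.erase r,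
                  (1 - Polynomial.C (β s) * Polynomial.X) : ℂ[X]) : PowerSeries ℂ)) := by
            ring
        _ = _ := by rw [geom_inv, one_mul]
    rw [Finset.sum_congr rfl (fun r _ => hterm r)]
    have hcoeR : ((R : ℂ[X]) : PowerSeries ℂ)
        = ∑ r, PowerSeries.C (A r) * ((∏ s ∈ Finset.univ.erase r,
            (1 - Polynomial.C (β s) * Polynomial.X) : ℂ[X]) : PowerSeries ℂ) := by
      rw [hR]
      rw [show ((↑(∑ r, Polynomial.C (A r) * ∏ s ∈ Finset.univ.erase r,
          (1 - Polynomial.C (β s) * Polynomial.X)) : ℂ[X]) : PowerSeries ℂ)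
        = Polynomial.coeToPowerSeries.ringHom (∑ r, Polynomial.C (A r)
            * ∏ s ∈ Finset.univ.erase r,
              (1 - Polynomial.C (β s) * Polynomial.X)) from rfl]
      rw [map_sum]
      refine Finset.sum_congr rfl (fun r _ => ?_)
      rw [map_mul, Polynomial.coeToPowerSeries.ringHom_apply,
        Polynomial.coeToPowerSeries.ringHom_apply, Polynomial.coe_C]
    rw [← hcoeR, hR1]
    exact Polynomial.coe_one
  have hBE : PowerSeries.mk b = E := by
    have h1 : E = E * (PowerSeries.mk b * (Q : PowerSeries ℂ)) := by rw [hb, mul_one]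
    have h2 : E * (PowerSeries.mk b * (Q : PowerSeries ℂ))
        = PowerSeries.mk b * (E * (Q : PowerSeries ℂ)) := by ring
    rw [h1, h2, hEQ, mul_one]
  intro n
  have hc := congrArg (PowerSeries.coeff n) hBE
  rw [PowerSeries.coeff_mk] at hc
  rw [hc, hE, map_sum]
  refine Finset.sum_congr rfl (fun r _ => ?_)
  rw [PowerSeries.coeff_C_mul, PowerSeries.coeff_mk]

section Main

open MuBiasAux

set_option maxHeartbeats 1600000

/-- For a quadratic character `χ` modulo a monic `m` of odd degree
`M ≥ 3` over `F_q` (`q` odd), assuming the factorization of `ℒ(u,χ)` with inverse zeros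
`√q e^{±iθ_j}`, the bias `b^μ(n)` is `q^{n/2} ∑_j γ_j sin(nθ_j + φ_j)` for all `n ≥ 1`. -/
theorem muBias_trigonometric_form_odd {F : Type*} [Field F] [Fintype F]
    (hq : Odd (Fintype.card F))
    (m : Polynomial F) (hm : m.Monic) (hModd : Odd m.natDegree) (hM3 : 3 ≤ m.natDegree)
    (χ : Polynomial F → ℤ) (hχ1 : χ 1 = 1) (hχmul : ∀ f g, χ (f * g) = χ f * χ g)
    (hχ0 : ∀ f, ¬ IsCoprime f m → χ f = 0) (hχsq : ∀ f, IsCoprime f m → χ f ^ 2 = 1)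
    (θ : Fin ((m.natDegree - 1) / 2) → ℝ) (hθinj : Function.Injective θ)
    (hθmem : ∀ j, θ j ∈ Set.Ioo 0 Real.pi)
    (hvanish : ∀ n, m.natDegree ≤ n → coeffSum χ n = 0)
    (hfact : (∑ n ∈ Finset.range m.natDegree,
          Polynomial.C ((coeffSum χ n : ℤ) : ℝ) * Polynomial.X ^ n) =
        ∏ j, (1 - Polynomial.C (2 * Real.sqrt (Fintype.card F) * Real.cos (θ j)) * Polynomial.X
          + Polynomial.C ((Fintype.card F : ℝ)) * Polynomial.X ^ 2)) :
    ∃ γ φ : Fin ((m.natDegree - 1) / 2) → ℝ, ∀ n : ℕ, 1 ≤ n →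
      ((coeffSum (fun f => polyMoebius f * χ f) n : ℤ) : ℝ) =
        (Fintype.card F : ℝ) ^ ((n : ℝ) / 2) *
          ∑ j, γ j * Real.sin (n * θ j + φ j) := by
  classical
  have hq1 : 0 < Fintype.card F := Fintype.card_pos
  have hqR : (0:ℝ) < (Fintype.card F : ℝ) := by exact_mod_cast hq1
  have hq0 : (0:ℝ) ≤ (Fintype.card F : ℝ) := le_of_lt hqR
  have hsqpos : 0 < Real.sqrt (Fintype.card F) := Real.sqrt_pos.mpr hqR
  have hsqne : ((Real.sqrt (Fintype.card F) : ℝ) : ℂ) ≠ 0 :=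
    Complex.ofReal_ne_zero.mpr (ne_of_gt hsqpos)
  have hM'pos : 0 < (m.natDegree - 1) / 2 := by omega
  set ang : Fin ((m.natDegree - 1) / 2) × Bool → ℝ :=
    fun r => if r.2 then θ r.1 else -(θ r.1) with hang
  set β : Fin ((m.natDegree - 1) / 2) × Bool → ℂ :=
    fun r => ((Real.sqrt (Fintype.card F) : ℝ) : ℂ)
      * Complex.exp ((ang r : ℂ) * Complex.I) with hβ
  haveI : Nonempty (Fin ((m.natDegree - 1) / 2) × Bool) := ⟨(⟨0, hM'pos⟩, true)⟩
  have hβ0 : ∀ r, β r ≠ 0 := fun r => mul_ne_zero hsqne (Complex.exp_ne_zero _)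
  have hre : ∀ r, (β r).re = Real.sqrt (Fintype.card F) * Real.cos (ang r) := by
    intro r
    rw [hβ]
    simp [Complex.mul_re, Complex.exp_ofReal_mul_I_re, Complex.exp_ofReal_mul_I_im]
  have him : ∀ r, (β r).im = Real.sqrt (Fintype.card F) * Real.sin (ang r) := by
    intro r
    rw [hβ]
    simp [Complex.mul_im, Complex.exp_ofReal_mul_I_re, Complex.exp_ofReal_mul_I_im]
  have hsinpos : ∀ j, 0 < Real.sin (θ j) :=
    fun j => Real.sin_pos_of_pos_of_lt_pi (hθmem j).1 (hθmem j).2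
  have hangt : ∀ j, ang (j, true) = θ j := fun j => by simp [hang]
  have hangf : ∀ j, ang (j, false) = -(θ j) := fun j => by simp [hang]
  have hcos_inj : ∀ j j', Real.cos (θ j) = Real.cos (θ j') → j = j' := by
    intro j j' hc
    refine hθinj (Real.injOn_cos ?_ ?_ hc)
    · exact ⟨le_of_lt (hθmem j).1, le_of_lt (hθmem j).2⟩
    · exact ⟨le_of_lt (hθmem j').1, le_of_lt (hθmem j').2⟩
  have hβinj : Function.Injective β := by
    rintro ⟨j, b⟩ ⟨j', b'⟩ h
    have h1 : Real.sin (ang (j, b)) = Real.sin (ang (j', b')) :=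
      mul_left_cancel₀ (ne_of_gt hsqpos) (by rw [← him (j, b), ← him (j', b'), h])
    have h2 : Real.cos (ang (j, b)) = Real.cos (ang (j', b')) :=
      mul_left_cancel₀ (ne_of_gt hsqpos) (by rw [← hre (j, b), ← hre (j', b'), h])
    cases b <;> cases b'
    · rw [hangf, hangf, Real.cos_neg, Real.cos_neg] at h2
      rw [hcos_inj _ _ h2]
    · rw [hangf, hangt, Real.sin_neg] at h1
      have := hsinpos j
      have := hsinpos j'
      linarith
    · rw [hangt, hangf, Real.sin_neg] at h1
      have := hsinpos j
      have := hsinpos j'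
      linarith
    · rw [hangt, hangt] at h2
      rw [hcos_inj _ _ h2]
  -- the quadratic factors split into linear factors over ℂ
  have hquad : ∀ j, Polynomial.map (algebraMap ℝ ℂ)
      (1 - Polynomial.C (2 * Real.sqrt (Fintype.card F) * Real.cos (θ j)) * Polynomial.X
        + Polynomial.C ((Fintype.card F : ℝ)) * Polynomial.X ^ 2)
      = (1 - Polynomial.C (β (j, true)) * Polynomial.X)
        * (1 - Polynomial.C (β (j, false)) * Polynomial.X) := by
    intro j
    have e1 : β (j, true) = ((Real.sqrt (Fintype.card F) : ℝ) : ℂ)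
        * Complex.exp ((θ j : ℂ) * Complex.I) := by
      simp only [hβ]
      rw [hangt]
    have e2 : β (j, false) = ((Real.sqrt (Fintype.card F) : ℝ) : ℂ)
        * Complex.exp (-(θ j : ℂ) * Complex.I) := by
      simp only [hβ]
      rw [hangf]
      push_cast
      ring_nf
    have hsum : β (j, true) + β (j, false)
        = ((2 * Real.sqrt (Fintype.card F) * Real.cos (θ j) : ℝ) : ℂ) := by
      rw [e1, e2, ← mul_add, ← Complex.two_cos, ← Complex.ofReal_cos]
      push_cast
      ring
    have hprod : β (j, true) * β (j, false) = ((Fintype.card F : ℝ) : ℂ) := by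
      rw [e1, e2, mul_mul_mul_comm, ← Complex.exp_add,
        show (θ j : ℂ) * Complex.I + -(θ j : ℂ) * Complex.I = 0 from by ring,
        Complex.exp_zero, mul_one, ← Complex.ofReal_mul, Real.mul_self_sqrt hq0]
    simp only [Polynomial.map_add, Polynomial.map_sub, Polynomial.map_one,
      Polynomial.map_mul, Polynomial.map_C, Polynomial.map_X, Polynomial.map_pow]
    have key : ∀ u v : ℂ, (1 - Polynomial.C u * Polynomial.X)
          * (1 - Polynomial.C v * Polynomial.X)
        = 1 - Polynomial.C (u + v) * Polynomial.X
          + Polynomial.C (u * v) * Polynomial.X ^ 2 := by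
      intro u v
      rw [Polynomial.C_add, Polynomial.C_mul]
      ring
    rw [show (algebraMap ℝ ℂ) (2 * Real.sqrt (Fintype.card F) * Real.cos (θ j))
        = ((2 * Real.sqrt (Fintype.card F) * Real.cos (θ j) : ℝ) : ℂ) from rfl,
      show (algebraMap ℝ ℂ) ((Fintype.card F : ℝ)) = ((Fintype.card F : ℝ) : ℂ) from rfl,
      key, hsum, hprod]
  have hPcfact : Polynomial.map (algebraMap ℝ ℂ) (∑ n ∈ Finset.range m.natDegree,
        Polynomial.C ((coeffSum χ n : ℤ) : ℝ) * Polynomial.X ^ n)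
      = ∏ r, (1 - Polynomial.C (β r) * Polynomial.X) := by
    rw [hfact, Polynomial.map_prod]
    calc ∏ j, Polynomial.map (algebraMap ℝ ℂ)
          (1 - Polynomial.C (2 * Real.sqrt (Fintype.card F) * Real.cos (θ j)) * Polynomial.X
            + Polynomial.C ((Fintype.card F : ℝ)) * Polynomial.X ^ 2)
        = ∏ j, ((1 - Polynomial.C (β (j, true)) * Polynomial.X)
            * (1 - Polynomial.C (β (j, false)) * Polynomial.X)) :=
          Finset.prod_congr rfl (fun j _ => hquad j)
      _ = ∏ j, ∏ b, (1 - Polynomial.C (β (j, b)) * Polynomial.X) := by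
          refine Finset.prod_congr rfl (fun j _ => ?_)
          exact (Fintype.prod_bool (fun b => 1 - Polynomial.C (β (j, b)) * Polynomial.X)).symm
      _ = ∏ r, (1 - Polynomial.C (β r) * Polynomial.X) :=
          (Fintype.prod_prod_type
            (fun r : Fin ((m.natDegree - 1) / 2) × Bool
              => 1 - Polynomial.C (β r) * Polynomial.X)).symm
  have hcoeff : ∀ k, (Polynomial.map (algebraMap ℝ ℂ) (∑ n ∈ Finset.range m.natDegree,
        Polynomial.C ((coeffSum χ n : ℤ) : ℝ) * Polynomial.X ^ n)).coeff k
      = ((coeffSum χ k : ℤ) : ℂ) := by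
    intro k
    rw [Polynomial.coeff_map]
    have hk : (∑ n ∈ Finset.range m.natDegree,
        Polynomial.C ((coeffSum χ n : ℤ) : ℝ) * Polynomial.X ^ n).coeff k
        = if k < m.natDegree then ((coeffSum χ k : ℤ) : ℝ) else 0 := by
      rw [Polynomial.finset_sum_coeff]
      simp only [Polynomial.coeff_C_mul, Polynomial.coeff_X_pow, mul_ite, mul_one, mul_zero]
      rw [Finset.sum_ite_eq (Finset.range m.natDegree) k
        (fun n => ((coeffSum χ n : ℤ) : ℝ))]
      simp [Finset.mem_range]
    rw [hk]
    by_cases hkM : k < m.natDegree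
    · rw [if_pos hkM]
      push_cast [Complex.coe_algebraMap]
      norm_num
    · rw [if_neg hkM, hvanish k (by omega)]
      simp
  have hcs0 : coeffSum (fun f => polyMoebius f * χ f) 0 = 1 := by
    rw [coeffSum_eq, Mn_zero, Finset.sum_singleton, polyMoebius_one, hχ1]
    norm_num
  have hc0 : coeffSum χ 0 = 1 := by
    rw [coeffSum_eq, Mn_zero, Finset.sum_singleton, hχ1]
  have hbQ : PowerSeries.mk (fun n => ((coeffSum (fun f => polyMoebius f * χ f) n : ℤ) : ℂ))
      * ((∏ r, (1 - Polynomial.C (β r) * Polynomial.X) : ℂ[X]) : PowerSeries ℂ) = 1 := by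
    rw [← hPcfact]
    ext n
    rw [PowerSeries.coeff_mul, PowerSeries.coeff_one]
    simp only [PowerSeries.coeff_mk, Polynomial.coeff_coe, hcoeff]
    rw [Finset.Nat.sum_antidiagonal_eq_sum_range_succ_mk]
    cases n with
    | zero => simp [hcs0, hc0]
    | succ n =>
        rw [if_neg (Nat.succ_ne_zero n)]
        have hz := conv χ hχmul (n + 1) (by omega)
        calc ∑ k ∈ Finset.range (n + 1 + 1),
              ((coeffSum (fun f => polyMoebius f * χ f) k : ℤ) : ℂ)
                * ((coeffSum χ (n + 1 - k) : ℤ) : ℂ)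
            = ((∑ k ∈ Finset.range (n + 1 + 1),
                coeffSum (fun f => polyMoebius f * χ f) k * coeffSum χ (n + 1 - k) : ℤ) : ℂ) := by
              push_cast
              rfl
          _ = 0 := by rw [hz]; exact Int.cast_zero
  have hbn := partial_fractions β hβ0 hβinj _ hbQ
  set A : Fin ((m.natDegree - 1) / 2) × Bool → ℂ :=
    fun r => ∏ s ∈ Finset.univ.erase r, (β r / (β r - β s)) with hAdef
  set aa : Fin ((m.natDegree - 1) / 2) → ℝ :=
    fun j => (A (j, true)).re + (A (j, false)).re with haa
  set bb : Fin ((m.natDegree - 1) / 2) → ℝ :=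
    fun j => (A (j, false)).im - (A (j, true)).im with hbbdef
  set z : Fin ((m.natDegree - 1) / 2) → ℂ :=
    fun j => (bb j : ℂ) + (aa j : ℂ) * Complex.I with hzdef
  refine ⟨fun j => ‖z j‖, fun j => Complex.arg (z j), fun n hn => ?_⟩
  have htrig : ∀ (j : Fin ((m.natDegree - 1) / 2)) (t : ℝ),
      ‖z j‖ * Real.sin (t + Complex.arg (z j))
        = bb j * Real.sin t + aa j * Real.cos t := by
    intro j t
    have hzre : (z j).re = bb j := by simp [hzdef]
    have hzim : (z j).im = aa j := by simp [hzdef]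
    rw [Real.sin_add]
    by_cases h : z j = 0
    · have h1 : bb j = 0 := by rw [← hzre, h]; simp
      have h2 : aa j = 0 := by rw [← hzim, h]; simp
      simp [h, h1, h2]
    · have habs : ‖z j‖ ≠ 0 := by simpa using h
      have e1 : ‖z j‖ * Real.cos (Complex.arg (z j)) = bb j := by
        rw [Complex.cos_arg h, mul_comm, div_mul_cancel₀ _ habs, hzre]
      have e2 : ‖z j‖ * Real.sin (Complex.arg (z j)) = aa j := by
        rw [Complex.sin_arg, mul_comm, div_mul_cancel₀ _ habs, hzim]
      calc ‖z j‖ * (Real.sin t * Real.cos (Complex.arg (z j))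
            + Real.cos t * Real.sin (Complex.arg (z j)))
          = Real.sin t * (‖z j‖ * Real.cos (Complex.arg (z j)))
            + Real.cos t * (‖z j‖ * Real.sin (Complex.arg (z j))) := by ring
        _ = bb j * Real.sin t + aa j * Real.cos t := by rw [e1, e2]; ring
  have hre_term : ∀ r, (A r * β r ^ n).re
      = Real.sqrt (Fintype.card F) ^ n
        * ((A r).re * Real.cos (n * ang r) - (A r).im * Real.sin (n * ang r)) := by
    intro r
    have hβpow : β r ^ n = ((Real.sqrt (Fintype.card F) ^ n : ℝ) : ℂ)
        * Complex.exp (((n * ang r : ℝ) : ℂ) * Complex.I) := by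
      simp only [hβ]
      rw [mul_pow, ← Complex.ofReal_pow, ← Complex.exp_nat_mul]
      congr 2
      push_cast
      ring
    rw [hβpow]
    simp only [Complex.mul_re, Complex.mul_im, Complex.ofReal_re, Complex.ofReal_im,
      Complex.exp_ofReal_mul_I_re, Complex.exp_ofReal_mul_I_im]
    ring
  have hmain : ((coeffSum (fun f => polyMoebius f * χ f) n : ℤ) : ℝ)
      = ∑ r, (A r * β r ^ n).re := by
    have h2 := congrArg Complex.re (hbn n)
    rw [Complex.re_sum] at h2
    simp only [hAdef]
    exact_mod_cast h2
  rw [hmain]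
  have hsplit : ∑ r, (A r * β r ^ n).re
      = Real.sqrt (Fintype.card F) ^ n
        * ∑ j, (bb j * Real.sin (n * θ j) + aa j * Real.cos (n * θ j)) := by
    rw [Finset.sum_congr rfl (fun r _ => hre_term r)]
    rw [Fintype.sum_prod_type]
    rw [Finset.mul_sum]
    refine Finset.sum_congr rfl (fun j _ => ?_)
    rw [Fintype.sum_bool, hangt, hangf]
    rw [show (n : ℝ) * -(θ j) = -((n : ℝ) * θ j) from by ring, Real.cos_neg, Real.sin_neg]
    rw [haa, hbbdef]
    ring
  rw [hsplit]
  have hγ : ∑ j, ‖z j‖ * Real.sin (n * θ j + Complex.arg (z j))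
      = ∑ j, (bb j * Real.sin (n * θ j) + aa j * Real.cos (n * θ j)) :=
    Finset.sum_congr rfl (fun j _ => htrig j ((n : ℝ) * θ j))
  rw [← hγ]
  have hpow : Real.sqrt (Fintype.card F) ^ n = (Fintype.card F : ℝ) ^ ((n : ℝ) / 2) := by
    rw [Real.sqrt_eq_rpow, ← Real.rpow_natCast ((Fintype.card F : ℝ) ^ ((1:ℝ)/2)) n,
      ← Real.rpow_mul hq0]
    congr 1
    ring
  rw [hpow]

end Main
end

section
/- Let F be a finite field with q elements, q odd, A = F[T], m ∈ A monic of even degree M ≥ 4, and M' = (M−2)/2. Let χ : A → ℤ be completely multiplicative with χ(f) = 0 whenever f is not coprime to m and χ(f)² = 1 whenever f is coprime to m. Set c(n) = ∑_{f monic, deg f = n} χ(f) and b^μ(n) = ∑_{f monic, deg f = n} μ(f)χ(f). Suppose there are pairwise distinct θ_1, …, θ_{M'} ∈ (0, π) such that c(n) = 0 for all n ≥ M and, as polynomials with real coefficients, ∑_{n=0}^{M−1} c(n) X^n = (1 − X)·∏_{j=1}^{M'} (1 − 2√q·cos(θ_j)·X + q X²). Then there exist real numbers δ, γ_1, …, γ_{M'}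 and φ_1, …, φ_{M'} such that for every n ≥ 1, b^μ(n) = δ + q^{n/2} ∑_{j=1}^{M'} γ_j sin(nθ_j + φ_j). -/
open Polynomial
open scoped Classical

section Aux
set_option linter.unusedSectionVars false
variable {F : Type*} [Field F] [Fintype F]

lemma finite_monicDeg (n : ℕ) : {f : F[X] | f.Monic ∧ f.natDegree = n}.Finite := by
  have : Set.InjOn (fun f : F[X] => fun i : Fin (n+1) => f.coeff i)
      {f : F[X] | f.Monic ∧ f.natDegree = n} := by
    intro f hf g hg h
    ext i
    by_cases hi : i ≤ n
    · have := congrFun h ⟨i, Nat.lt_succ_of_le hi⟩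
      simpa using this
    · push_neg at hi
      rw [Polynomial.coeff_eq_zero_of_natDegree_lt (by rw [hf.2]; omega),
        Polynomial.coeff_eq_zero_of_natDegree_lt (by rw [hg.2]; omega)]
  exact Set.Finite.of_finite_image (Set.toFinite _) this

/-- The finset of monic polynomials of degree `n`. -/

noncomputable def SD (F : Type*) [Field F] [Fintype F] (n : ℕ) : Finset F[X] :=
  (finite_monicDeg n).toFinset

lemma mem_SD {n : ℕ} {f : F[X]} : f ∈ SD F n ↔ f.Monic ∧ f.natDegree = n := by
  simp [SD]

lemma coeffSum_eq (w : F[X] → ℤ) (n : ℕ) : coeffSum w n = ∑ f ∈ SD F n, w f := by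
  rw [coeffSum, ← finsum_mem_coe_finset]
  congr 1
  simp [SD]

lemma SD_zero : SD F 0 = {1} := by
  ext f
  simp only [mem_SD, Finset.mem_singleton]
  constructor
  · rintro ⟨hf, h0⟩; exact hf.natDegree_eq_zero.mp h0
  · rintro rfl; exact ⟨monic_one, natDegree_one⟩

noncomputable def DD (f : F[X]) : Finset F[X] :=
  ((Finset.range (f.natDegree + 1)).biUnion (SD F)).filter (· ∣ f)

lemma mem_DD {f h : F[X]} (hf : f ≠ 0) : h ∈ DD f ↔ h.Monic ∧ h ∣ f := by
  simp only [DD, Finset.mem_filter, Finset.mem_biUnion, Finset.mem_range, mem_SD]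
  constructor
  · rintro ⟨⟨k, -, hk, -⟩, hd⟩; exact ⟨hk, hd⟩
  · rintro ⟨hmon, hd⟩
    exact ⟨⟨h.natDegree, Nat.lt_succ_of_le (Polynomial.natDegree_le_of_dvd hd hf), hmon, rfl⟩, hd⟩

lemma card_normFactors (x : F[X]) :
    Multiset.card (UniqueFactorizationMonoid.normalizedFactors x) =
      Multiset.card (UniqueFactorizationMonoid.factors x) := by
  simp [UniqueFactorizationMonoid.normalizedFactors]

lemma card_factors_mul {a b : F[X]} (ha : a ≠ 0) (hb : b ≠ 0) :
    Multiset.card (UniqueFactorizationMonoid.factors (a * b)) =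
      Multiset.card (UniqueFactorizationMonoid.factors a) +
        Multiset.card (UniqueFactorizationMonoid.factors b) := by
  have := congrArg Multiset.card (UniqueFactorizationMonoid.normalizedFactors_mul ha hb)
  simpa [card_normFactors] using this

lemma polyMoebius_mul_prime {p h : F[X]} (hp : Prime p) (hph : ¬ p ∣ h)
    (hsq : Squarefree h) : polyMoebius (p * h) = - polyMoebius h := by
  have hsq2 : Squarefree (p * h) := by
    rw [squarefree_mul_iff]
    exact ⟨hp.irreducible.isRelPrime_iff_not_dvd.mpr hph, hp.squarefree, hsq⟩
  rw [polyMoebius, polyMoebius, if_pos hsq2, if_pos hsq,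
    card_factors_mul hp.ne_zero hsq.ne_zero]
  have hcp : Multiset.card (UniqueFactorizationMonoid.factors p) = 1 := by
    rw [← card_normFactors,
      UniqueFactorizationMonoid.normalizedFactors_irreducible hp.irreducible]
    simp
  rw [hcp, pow_add, pow_one]
  ring

lemma polyMoebius_one : polyMoebius (1 : F[X]) = 1 := by
  rw [polyMoebius, if_pos squarefree_one]
  simp [UniqueFactorizationMonoid.factors_one]

lemma moebius_ne_zero_sq {h : F[X]} (hne : polyMoebius h ≠ 0) : Squarefree h := by
  by_contra hc; exact hne (by simp [polyMoebius, hc])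

lemma sum_moebius_divisors (f : F[X]) (hmon : f.Monic) (hdeg : 1 ≤ f.natDegree) :
    ∑ h ∈ DD f, polyMoebius h = 0 := by
  have hf0 : f ≠ 0 := hmon.ne_zero
  -- find a monic prime divisor
  obtain ⟨p₀, hp₀⟩ := UniqueFactorizationMonoid.exists_mem_factors hf0
    (by intro hu; rw [Polynomial.isUnit_iff] at hu; obtain ⟨c, -, rfl⟩ := hu; simp at hdeg)
  have hp₀p : Prime p₀ := UniqueFactorizationMonoid.prime_of_factor _ hp₀
  set p : F[X] := normalize p₀ with hpdef
  have hp : Prime p := by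
    rwa [hpdef, ← Associated.prime_iff (associated_normalize p₀)]
  have hpm : p.Monic := Polynomial.monic_normalize hp₀p.ne_zero
  have hpf : p ∣ f := by
    rw [hpdef, normalize_dvd_iff]
    exact UniqueFactorizationMonoid.dvd_of_mem_factors hp₀
  -- restrict to squarefree divisors
  rw [Finset.sum_filter_of_ne (p := fun h => Squarefree h)
    (fun x _ hx => moebius_ne_zero_sq hx) |>.symm]
  set s : Finset F[X] := (DD f).filter Squarefree with hs
  have mem_s : ∀ {h}, h ∈ s ↔ (h.Monic ∧ h ∣ f) ∧ Squarefree h := by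
    intro h; rw [hs, Finset.mem_filter, mem_DD hf0]
  refine Finset.sum_involution (fun h _ => if p ∣ h then h / p else h * p) ?_ ?_ ?_ ?_
  · -- μ h + μ (g h) = 0
    intro h hh
    obtain ⟨⟨hhm, hhf⟩, hhsq⟩ := mem_s.mp hh
    by_cases hph : p ∣ h
    · simp only [if_pos hph]
      have hmd : p * (h / p) = h := EuclideanDomain.mul_div_cancel' hp.ne_zero hph
      have hnd : ¬ p ∣ h / p := by
        intro hd
        exact hp.not_unit (hhsq p (by
          calc p * p ∣ p * (h / p) := mul_dvd_mul_left p hd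
          _ = h := hmd))
      have hsq' : Squarefree (h / p) := hhsq.squarefree_of_dvd ⟨p, by rw [mul_comm]; exact hmd.symm⟩
      have := polyMoebius_mul_prime hp hnd hsq'
      rw [hmd] at this
      rw [this]; ring
    · simp only [if_neg hph]
      rw [mul_comm h p, polyMoebius_mul_prime hp hph hhsq]; ring
  · -- g h ≠ h when μ h ≠ 0
    intro h hh hne
    obtain ⟨⟨hhm, hhf⟩, hhsq⟩ := mem_s.mp hh
    by_cases hph : p ∣ h
    · simp only [if_pos hph]
      intro heq
      have hmd : p * (h / p) = h := EuclideanDomain.mul_div_cancel' hp.ne_zero hph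
      rw [heq] at hmd
      exact hp.ne_one (mul_right_cancel₀ hhm.ne_zero (by rw [hmd, one_mul]))
    · simp only [if_neg hph]
      intro heq
      exact hp.ne_one (mul_left_cancel₀ hhm.ne_zero (by rw [heq, mul_one]))
  · -- g maps s to s
    intro h hh
    obtain ⟨⟨hhm, hhf⟩, hhsq⟩ := mem_s.mp hh
    by_cases hph : p ∣ h
    · simp only [if_pos hph]
      have hmd : p * (h / p) = h := EuclideanDomain.mul_div_cancel' hp.ne_zero hph
      have hdvd : h / p ∣ h := ⟨p, by rw [mul_comm]; exact hmd.symm⟩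
      refine mem_s.mpr ⟨⟨?_, hdvd.trans hhf⟩, hhsq.squarefree_of_dvd hdvd⟩
      exact hpm.of_mul_monic_left (by rwa [hmd])
    · simp only [if_neg hph]
      obtain ⟨t, ht⟩ := hhf
      have hpt : p ∣ t := by
        rcases hp.dvd_mul.mp (show p ∣ h * t by rw [← ht]; exact hpf) with h1 | h1
        · exact absurd h1 hph
        · exact h1
      obtain ⟨t', rfl⟩ := hpt
      refine mem_s.mpr ⟨⟨hhm.mul hpm, ⟨t', by rw [ht]; ring⟩⟩, ?_⟩
      rw [squarefree_mul_iff]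
      exact ⟨(hp.irreducible.isRelPrime_iff_not_dvd.mpr hph).symm, hhsq, hp.squarefree⟩
  · -- involution
    intro h hh
    obtain ⟨⟨hhm, hhf⟩, hhsq⟩ := mem_s.mp hh
    by_cases hph : p ∣ h
    · simp only [if_pos hph]
      have hmd : p * (h / p) = h := EuclideanDomain.mul_div_cancel' hp.ne_zero hph
      have hnd : ¬ p ∣ h / p := by
        intro hd
        exact hp.not_unit (hhsq p (by
          calc p * p ∣ p * (h / p) := mul_dvd_mul_left p hd
          _ = h := hmd))
      rw [if_neg hnd, mul_comm]
      exact hmd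
    · simp only [if_neg hph]
      rw [if_pos (Dvd.intro_left h rfl)]
      exact mul_div_cancel_right₀ _ hp.ne_zero

lemma convolution (χ : Polynomial F → ℤ) (hχ1 : χ 1 = 1)
    (hχmul : ∀ f g, χ (f * g) = χ f * χ g) (n : ℕ) :
    ∑ k ∈ Finset.range (n+1),
      coeffSum χ k * coeffSum (fun f => polyMoebius f * χ f) (n - k) =
      if n = 0 then 1 else 0 := by
  have key : ∑ k ∈ Finset.range (n+1),
      coeffSum χ k * coeffSum (fun f => polyMoebius f * χ f) (n - k) =
      ∑ f ∈ SD F n, χ f * ∑ h ∈ DD f, polyMoebius h := by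
    simp_rw [coeffSum_eq, Finset.sum_mul_sum, Finset.mul_sum]
    simp_rw [← Finset.sum_product']
    rw [← Finset.sum_sigma (Finset.range (n+1)) (fun k => SD F k ×ˢ SD F (n - k))
        (fun x => χ x.2.1 * (polyMoebius x.2.2 * χ x.2.2)),
      ← Finset.sum_sigma (SD F n) (fun f => DD f)
        (fun y => χ y.1 * polyMoebius y.2)]
    refine Finset.sum_nbij' (fun x => ⟨x.2.1 * x.2.2, x.2.2⟩)
      (fun y => ⟨n - y.2.natDegree, (y.1 / y.2, y.2)⟩) ?_ ?_ ?_ ?_ ?_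
    · rintro ⟨k, g, h⟩ hx
      simp only [Finset.mem_sigma, Finset.mem_range, Finset.mem_product, mem_SD] at hx
      obtain ⟨hk, ⟨hgm, hgd⟩, hhm, hhd⟩ := hx
      have hmul : (g * h).Monic := hgm.mul hhm
      simp only [Finset.mem_sigma, mem_SD]
      refine ⟨⟨hmul, ?_⟩, (mem_DD hmul.ne_zero).mpr ⟨hhm, Dvd.intro_left g rfl⟩⟩
      rw [hgm.natDegree_mul hhm, hgd, hhd]; omega
    · rintro ⟨f, h⟩ hy
      simp only [Finset.mem_sigma, mem_SD] at hy
      obtain ⟨⟨hfm, hfd⟩, hmem⟩ := hy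
      obtain ⟨hhm, hhf⟩ := (mem_DD hfm.ne_zero).mp hmem
      have hmd : h * (f / h) = f := EuclideanDomain.mul_div_cancel' hhm.ne_zero hhf
      have hgm : (f / h).Monic := hhm.of_mul_monic_left (by rwa [hmd])
      have hdeg : h.natDegree + (f / h).natDegree = n := by
        rw [← hhm.natDegree_mul hgm, hmd, hfd]
      simp only [Finset.mem_sigma, Finset.mem_range, Finset.mem_product, mem_SD]
      exact ⟨by omega, ⟨hgm, by omega⟩, hhm, by omega⟩
    · rintro ⟨k, g, h⟩ hx
      simp only [Finset.mem_sigma, Finset.mem_range, Finset.mem_product, mem_SD] at hx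
      obtain ⟨hk, ⟨hgm, hgd⟩, hhm, hhd⟩ := hx
      have e1 : g * h / h = g := mul_div_cancel_right₀ g hhm.ne_zero
      have e2 : n - h.natDegree = k := by omega
      simp only [e1, e2]
    · rintro ⟨f, h⟩ hy
      simp only [Finset.mem_sigma, mem_SD] at hy
      obtain ⟨⟨hfm, hfd⟩, hmem⟩ := hy
      obtain ⟨hhm, hhf⟩ := (mem_DD hfm.ne_zero).mp hmem
      have hmd : h * (f / h) = f := EuclideanDomain.mul_div_cancel' hhm.ne_zero hhf
      have e1 : f / h * h = f := by rw [mul_comm]; exact hmd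
      simp only [e1]
    · rintro ⟨k, g, h⟩ hx
      simp only
      rw [hχmul]
      ring
  rw [key]
  by_cases hn : n = 0
  · subst hn
    rw [SD_zero, if_pos rfl, Finset.sum_singleton]
    have hDD1 : DD (1 : F[X]) = {1} := by
      ext h
      rw [mem_DD one_ne_zero, Finset.mem_singleton]
      constructor
      · rintro ⟨hm, hd⟩
        exact hm.natDegree_eq_zero.mp
          (Nat.le_zero.mp (le_trans (Polynomial.natDegree_le_of_dvd hd one_ne_zero) (by simp)))
      · rintro rfl; exact ⟨monic_one, dvd_refl 1⟩
    rw [hDD1, Finset.sum_singleton, polyMoebius_one, hχ1, mul_one]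
  · rw [if_neg hn]
    apply Finset.sum_eq_zero
    intro f hf
    obtain ⟨hfm, hfd⟩ := mem_SD.mp hf
    rw [sum_moebius_divisors f hfm (by omega), mul_zero]

end Aux

lemma exists_lincomb {ι : Type*} [Fintype ι] {M : ℕ} (hM : 2 ≤ M)
    (hcard : Fintype.card ι = M - 1)
    (c b : ℕ → ℂ) (hc0 : c 0 = 1) (α : ι → ℂ) (hαinj : Function.Injective α)
    (hα0 : ∀ i, α i ≠ 0)
    (hroot : ∀ i, ∑ k ∈ Finset.range M, c k * α i ^ (M - 1 - k) = 0)
    (hrec : ∀ n, M - 1 ≤ n → ∑ k ∈ Finset.range M, c k * b (n - k) = 0) :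
    ∃ lam : ι → ℂ, ∀ n, 1 ≤ n → b n = ∑ i, lam i * α i ^ n := by
  have e : ι ≃ Fin (M - 1) := Fintype.equivFinOfCardEq hcard
  set w : Fin (M - 1) → ℂ := α ∘ e.symm with hw
  have hwinj : Function.Injective w := hαinj.comp e.symm.injective
  set A : Matrix (Fin (M-1)) (Fin (M-1)) ℂ := fun n r => w r ^ ((n : ℕ) + 1) with hA
  have hdet : A.det ≠ 0 := by
    have hT : A.transpose = Matrix.diagonal w * Matrix.vandermonde w := by
      ext r s
      simp [hA, Matrix.mul_apply, Matrix.diagonal, Matrix.vandermonde, Finset.sum_ite_eq,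
        pow_succ']
      rfl
    have : A.det = (Matrix.diagonal w).det * (Matrix.vandermonde w).det := by
      rw [← Matrix.det_transpose A, hT, Matrix.det_mul]
    rw [this]
    refine mul_ne_zero ?_ (Matrix.det_vandermonde_ne_zero_iff.mpr hwinj)
    rw [Matrix.det_diagonal]
    exact Finset.prod_ne_zero_iff.mpr (fun r _ => hα0 _)
  set v : Fin (M-1) → ℂ := fun r => b ((r : ℕ) + 1) with hv
  set lam' : Fin (M-1) → ℂ := A⁻¹.mulVec v with hlam'
  have hAv : A.mulVec lam' = v := by
    rw [hlam', Matrix.mulVec_mulVec, Matrix.mul_nonsing_inv _ (isUnit_iff_ne_zero.mpr hdet),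
      Matrix.one_mulVec]
  refine ⟨lam' ∘ e, ?_⟩
  have hsum : ∀ n : ℕ, ∑ i, (lam' ∘ e) i * α i ^ n = ∑ r, lam' r * w r ^ n := by
    intro n
    rw [← Equiv.sum_comp e (fun r => lam' r * w r ^ n)]
    simp [hw]
  have hinit : ∀ n, 1 ≤ n → n < M → b n = ∑ i, (lam' ∘ e) i * α i ^ n := by
    intro n h1 h2
    have hr : n - 1 < M - 1 := by omega
    have := congrFun hAv ⟨n - 1, hr⟩
    rw [Matrix.mulVec] at this
    simp only [hv] at this
    rw [hsum]
    have hn1 : (n - 1) + 1 = n := by omega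
    rw [hn1] at this
    rw [← this]
    unfold dotProduct
    simp only [hA, hn1]
    exact Finset.sum_congr rfl (fun r _ => by ring)
  -- strong induction
  intro n hn1
  induction n using Nat.strong_induction_on with
  | _ n ih =>
    by_cases hnM : n < M
    · exact hinit n hn1 hnM
    · push_neg at hnM
      -- recurrences with head split off
      have hsplit : ∀ g : ℕ → ℂ, ∑ k ∈ Finset.range M, c k * g k =
          c 0 * g 0 + ∑ k ∈ Finset.Ico 1 M, c k * g k := by
        intro g
        rw [Finset.range_eq_Ico, Finset.sum_eq_sum_Ico_succ_bot (by omega : 0 < M)]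
      have hb : b n = - ∑ k ∈ Finset.Ico 1 M, c k * b (n - k) := by
        have h0 := hrec n (by omega)
        rw [hsplit (fun k => b (n - k))] at h0
        simp only [Nat.sub_zero, hc0, one_mul] at h0
        linear_combination h0
      have hs : ∀ i, (∑ k ∈ Finset.range M, c k * α i ^ (n - k)) = 0 := by
        intro i
        have : ∀ k ∈ Finset.range M, c k * α i ^ (n - k)
            = α i ^ (n - (M-1)) * (c k * α i ^ (M - 1 - k)) := by
          intro k hk
          rw [Finset.mem_range] at hk
          rw [show α i ^ (n - k) = α i ^ (n - (M-1)) * α i ^ (M - 1 - k) by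
            rw [← pow_add]; congr 1; omega]
          ring
        rw [Finset.sum_congr rfl this, ← Finset.mul_sum, hroot i, mul_zero]
      have hαn : ∀ i, α i ^ n = - ∑ k ∈ Finset.Ico 1 M, c k * α i ^ (n - k) := by
        intro i
        have h0 := hs i
        rw [hsplit (fun k => α i ^ (n - k))] at h0
        simp only [Nat.sub_zero, hc0, one_mul] at h0
        linear_combination h0
      rw [hb]
      have hbk : ∀ k ∈ Finset.Ico 1 M, c k * b (n - k)
          = c k * ∑ i, (lam' ∘ e) i * α i ^ (n - k) := by
        intro k hk
        rw [Finset.mem_Ico] at hk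
        rw [ih (n - k) (by omega) (by omega)]
      rw [Finset.sum_congr rfl hbk]
      symm
      have step1 : ∑ i, (lam' ∘ e) i * α i ^ n
          = -∑ i, ∑ k ∈ Finset.Ico 1 M, c k * ((lam' ∘ e) i * α i ^ (n - k)) := by
        rw [← Finset.sum_neg_distrib]
        refine Finset.sum_congr rfl (fun i _ => ?_)
        rw [hαn i, mul_neg, Finset.mul_sum]
        congr 1
        exact Finset.sum_congr rfl (fun k _ => by ring)
      rw [step1, Finset.sum_comm]
      congr 1
      refine Finset.sum_congr rfl (fun k _ => ?_)
      rw [Finset.mul_sum]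

lemma trig_combine (A B : ℝ) : ∃ γ φ : ℝ, ∀ x : ℝ,
    A * Real.cos x + B * Real.sin x = γ * Real.sin (x + φ) := by
  set z : ℂ := ⟨B, A⟩ with hz
  refine ⟨‖z‖, Complex.arg z, fun x => ?_⟩
  have h := Complex.norm_mul_cos_add_sin_mul_I z
  have hre : (‖z‖) * Real.cos (Complex.arg z) = B := by
    have := congrArg Complex.re h
    simpa [hz, Complex.ext_iff] using this
  have him : (‖z‖) * Real.sin (Complex.arg z) = A := by
    have := congrArg Complex.im h
    simpa [hz, Complex.ext_iff] using this
  rw [Real.sin_add, ← hre, ← him]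
  ring

lemma quad_root (t : ℝ) (u : ℂ) (hu : u = Complex.exp ((t : ℂ) * Complex.I) ∨
    u = Complex.exp ((-t : ℂ) * Complex.I)) :
    u ^ 2 - 2 * (Real.cos t : ℂ) * u + 1 = 0 := by
  have h2c : (2 : ℂ) * (Real.cos t : ℂ) =
      Complex.exp ((t : ℂ) * Complex.I) + Complex.exp ((-t : ℂ) * Complex.I) := by
    rw [Complex.ofReal_cos]; exact Complex.two_cos t
  have hinv : Complex.exp ((t : ℂ) * Complex.I) * Complex.exp ((-t : ℂ) * Complex.I) = 1 := by
    rw [← Complex.exp_add]; ring_nf; exact Complex.exp_zero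
  rcases hu with rfl | rfl
  · linear_combination (-(Complex.exp ((t : ℂ) * Complex.I))) * h2c - hinv
  · linear_combination (-(Complex.exp ((-t : ℂ) * Complex.I))) * h2c - hinv

lemma main_aux {q M M' : ℕ} (hq1 : 1 < q) (hMM' : M = 2 * M' + 2)
    (c b : ℕ → ℤ) (hc0 : c 0 = 1)
    (θ : Fin M' → ℝ) (hθinj : Function.Injective θ)
    (hθmem : ∀ j, θ j ∈ Set.Ioo 0 Real.pi)
    (hconv : ∀ n : ℕ, 1 ≤ n → ∑ k ∈ Finset.range (n+1), c k * b (n - k) = 0)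
    (hvanish : ∀ n, M ≤ n → c n = 0)
    (hev : ∀ x : ℂ, ∑ k ∈ Finset.range M, (c k : ℂ) * x ^ k =
      (1 - x) * ∏ j, (1 - 2 * (Real.sqrt q : ℂ) * (Real.cos (θ j) : ℂ) * x
        + (q : ℂ) * x ^ 2)) :
    ∃ δ : ℝ, ∃ γ φ : Fin M' → ℝ, ∀ n : ℕ, 1 ≤ n →
      ((b n : ℤ) : ℝ) = δ + (q : ℝ) ^ ((n : ℝ) / 2) *
        ∑ j, γ j * Real.sin (n * θ j + φ j) := by
  classical
  set cc : ℕ → ℂ := fun k => ((c k : ℤ) : ℂ) with hccdef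
  set bb : ℕ → ℂ := fun k => ((b k : ℤ) : ℂ) with hbbdef
  have hrecC : ∀ n, M - 1 ≤ n → ∑ k ∈ Finset.range M, cc k * bb (n - k) = 0 := by
    intro n hn
    have h2 := hconv n (by omega)
    have h3 : ∑ k ∈ Finset.range (n+1), c k * b (n-k) = ∑ k ∈ Finset.range M, c k * b (n-k) := by
      symm
      apply Finset.sum_subset (Finset.range_subset_range.mpr (by omega))
      intro k hk hk2
      rw [Finset.mem_range] at hk hk2
      rw [hvanish k (by omega), zero_mul]
    rw [h3] at h2
    simp only [hccdef, hbbdef]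
    exact_mod_cast congrArg (fun z : ℤ => (z : ℂ)) h2
  set r : ℝ := Real.sqrt q with hrdef
  have hr0 : (0:ℝ) < r := Real.sqrt_pos.mpr (by positivity)
  have hr1 : (1:ℝ) < r := by
    rw [hrdef, show (1:ℝ) = Real.sqrt 1 by simp]
    apply Real.sqrt_lt_sqrt (by norm_num)
    exact_mod_cast hq1
  have hr2 : (r:ℂ)^2 = (q:ℂ) := by
    rw [← Complex.ofReal_pow]
    norm_cast
    exact_mod_cast Real.sq_sqrt (by positivity : (0:ℝ) ≤ (q:ℝ))
  set ε : Fin M' → Bool → ℝ := fun j s => if s then θ j else -θ j with hεdef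
  set α : Option (Fin M' × Bool) → ℂ := fun i =>
    match i with
    | none => 1
    | some (j, s) => (r:ℂ) * Complex.exp ((ε j s : ℝ) * Complex.I) with hαdef
  have hrne : (r:ℂ) ≠ 0 := by exact_mod_cast hr0.ne'
  have hα0 : ∀ i, α i ≠ 0 := by
    rintro (_ | ⟨j, s⟩)
    · exact one_ne_zero
    · exact mul_ne_zero hrne (Complex.exp_ne_zero _)
  have habs : ∀ j s, ‖Complex.exp ((ε j s : ℝ) * Complex.I)‖ = 1 := by
    intro j s
    rw [Complex.norm_exp]
    simp
  have hexp_eq : ∀ a d : ℝ, Complex.exp ((a:ℂ) * Complex.I) = Complex.exp ((d:ℂ) * Complex.I) →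
      Real.cos a = Real.cos d ∧ Real.sin a = Real.sin d := by
    intro a d h
    constructor
    · have := congrArg Complex.re h
      simpa [Complex.exp_ofReal_mul_I_re] using this
    · have := congrArg Complex.im h
      simpa [Complex.exp_ofReal_mul_I_im] using this
  have hθeq : ∀ j k : Fin M', Real.cos (θ j) = Real.cos (θ k) → j = k := by
    intro j k h
    apply hθinj
    exact Real.injOn_cos ⟨(hθmem j).1.le, (hθmem j).2.le⟩ ⟨(hθmem k).1.le, (hθmem k).2.le⟩ h
  have hsinpos : ∀ j : Fin M', 0 < Real.sin (θ j) :=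
    fun j => Real.sin_pos_of_pos_of_lt_pi (hθmem j).1 (hθmem j).2
  have hαinj : Function.Injective α := by
    rintro (_ | ⟨j, s⟩) (_ | ⟨k, t⟩) h
    · rfl
    · exfalso
      have habs' := congrArg norm h
      simp only [hαdef, norm_one, norm_mul, habs, mul_one, Complex.norm_real, Real.norm_eq_abs] at habs'
      rw [abs_of_pos hr0] at habs'
      linarith
    · exfalso
      have habs' := congrArg norm h
      simp only [hαdef, norm_one, norm_mul, habs, mul_one, Complex.norm_real, Real.norm_eq_abs] at habs'
      rw [abs_of_pos hr0] at habs'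
      linarith
    · simp only [hαdef] at h
      have hex := mul_left_cancel₀ hrne h
      obtain ⟨hcos, hsin⟩ := hexp_eq _ _ hex
      have hjk : j = k := by
        apply hθeq
        cases s <;> cases t <;> simpa [hεdef, Real.cos_neg] using hcos
      subst hjk
      have hst : s = t := by
        cases s <;> cases t <;> simp [hεdef, Real.sin_neg] at hsin ⊢ <;> nlinarith [hsinpos j]
      rw [hst]
  have hroot : ∀ i, ∑ k ∈ Finset.range M, cc k * α i ^ (M - 1 - k) = 0 := by
    intro i
    have hx0 : ∑ k ∈ Finset.range M, cc k * ((α i)⁻¹) ^ k = 0 := by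
      simp only [hccdef]
      rw [hev]
      match i with
      | none =>
        simp [hαdef]
      | some (j, s) =>
        apply mul_eq_zero_of_right
        apply Finset.prod_eq_zero (Finset.mem_univ j)
        have hune : Complex.exp ((ε j s : ℝ) * Complex.I) ≠ 0 := Complex.exp_ne_zero _
        set u := Complex.exp ((ε j s : ℝ) * Complex.I) with hudef
        have hq2 : u ^ 2 - 2 * (Real.cos (θ j) : ℂ) * u + 1 = 0 := by
          apply quad_root
          cases s
          · right
            rw [hudef]
            norm_num [hεdef]
          · left
            rw [hudef]
            norm_num [hεdef]
        have hruz : (r:ℂ) * u ≠ 0 := mul_ne_zero hrne hune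
        have hαi : α (some (j, s)) = (r:ℂ) * u := by rw [hαdef]
        rw [hαi]
        have hC : ((r:ℂ)*u)⁻¹ * ((r:ℂ)*u) = 1 := inv_mul_cancel₀ hruz
        set w : ℂ := ((r:ℂ)*u)⁻¹ with hwdef
        linear_combination ((r:ℂ)^2*w^2) * hq2 - w^2 * hr2
          + (-(1 + (r:ℂ)*w*u - 2*(Real.cos (θ j):ℂ)*(r:ℂ)*w)) * hC
    have hterm : ∀ k ∈ Finset.range M, cc k * α i ^ (M - 1 - k)
        = α i ^ (M - 1) * (cc k * ((α i)⁻¹) ^ k) := by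
      intro k hk
      rw [Finset.mem_range] at hk
      rw [pow_sub₀ _ (hα0 i) (by omega), inv_pow]
      ring
    rw [Finset.sum_congr rfl hterm, ← Finset.mul_sum, hx0, mul_zero]
  obtain ⟨lam, hlam⟩ := exists_lincomb (M := M) (by omega)
    (by simp only [Fintype.card_option, Fintype.card_prod, Fintype.card_fin,
        Fintype.card_bool]; omega)
    cc bb (by simp only [hccdef]; exact_mod_cast congrArg (fun z : ℤ => (z:ℂ)) hc0)
    α hαinj hα0 hroot hrecC
  set Acos : Fin M' → ℝ := fun j => (lam (some (j, true))).re + (lam (some (j, false))).re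
    with hAcosdef
  set Asin : Fin M' → ℝ := fun j => (lam (some (j, false))).im - (lam (some (j, true))).im
    with hAsindef
  choose γ φ hγφ using fun j => trig_combine (Acos j) (Asin j)
  refine ⟨(lam none).re, γ, φ, ?_⟩
  intro n hn
  have hbbre : ((b n : ℤ) : ℝ) = (bb n).re := by simp [hbbdef]
  have hpow : (q:ℝ) ^ ((n:ℝ)/2) = r ^ n := by
    rw [hrdef, Real.sqrt_eq_rpow, ← Real.rpow_natCast ((q:ℝ) ^ ((1:ℝ)/2 : ℝ)) n,
      ← Real.rpow_mul (by positivity)]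
    congr 1
    ring
  rw [hbbre, hlam n hn, Fintype.sum_option, Fintype.sum_prod_type, Complex.add_re]
  have h1 : (lam none * α none ^ n).re = (lam none).re := by
    simp [hαdef]
  have hterm : ∀ j : Fin M', (∑ s, lam (some (j, s)) * α (some (j, s)) ^ n).re
      = r ^ n * (γ j * Real.sin (n * θ j + φ j)) := by
    intro j
    rw [Fintype.sum_bool]
    have hpowα : ∀ s : Bool, α (some (j,s)) ^ n
        = ((r ^ n : ℝ) : ℂ) * Complex.exp (((n * ε j s : ℝ) : ℂ) * Complex.I) := by
      intro s
      have hαi : α (some (j, s)) = (r:ℂ) * Complex.exp ((ε j s : ℝ) * Complex.I) := by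
        rw [hαdef]
      rw [hαi, mul_pow, ← Complex.exp_nat_mul]
      push_cast
      ring_nf
    rw [← hγφ j (n * θ j)]
    rw [hpowα, hpowα]
    simp only [hεdef, if_true, if_false, Bool.false_eq_true, mul_neg]
    simp only [Complex.add_re, Complex.mul_re, Complex.mul_im, Complex.ofReal_re,
      Complex.ofReal_im, Complex.exp_ofReal_mul_I_re, Complex.exp_ofReal_mul_I_im,
      Real.cos_neg, Real.sin_neg, hAcosdef, hAsindef]
    push_cast
    ring
  rw [h1, Complex.re_sum]
  rw [Finset.sum_congr rfl (fun j _ => hterm j), ← Finset.mul_sum, hpow]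


theorem muBias_trigonometric_form_even {F : Type*} [Field F] [Fintype F]
    (hq : Odd (Fintype.card F))
    (m : Polynomial F) (hm : m.Monic) (hMeven : Even m.natDegree) (hM4 : 4 ≤ m.natDegree)
    (χ : Polynomial F → ℤ) (hχ1 : χ 1 = 1) (hχmul : ∀ f g, χ (f * g) = χ f * χ g)
    (hχ0 : ∀ f, ¬ IsCoprime f m → χ f = 0) (hχsq : ∀ f, IsCoprime f m → χ f ^ 2 = 1)
    (θ : Fin ((m.natDegree - 2) / 2) → ℝ) (hθinj : Function.Injective θ)
    (hθmem : ∀ j, θ j ∈ Set.Ioo 0 Real.pi)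
    (hvanish : ∀ n, m.natDegree ≤ n → coeffSum χ n = 0)
    (hfact : (∑ n ∈ Finset.range m.natDegree,
          Polynomial.C ((coeffSum χ n : ℤ) : ℝ) * Polynomial.X ^ n) =
        (1 - Polynomial.X) *
          ∏ j, (1 - Polynomial.C (2 * Real.sqrt (Fintype.card F) * Real.cos (θ j)) * Polynomial.X
            + Polynomial.C ((Fintype.card F : ℝ)) * Polynomial.X ^ 2)) :
    ∃ δ : ℝ, ∃ γ φ : Fin ((m.natDegree - 2) / 2) → ℝ, ∀ n : ℕ, 1 ≤ n →
      ((coeffSum (fun f => polyMoebius f * χ f) n : ℤ) : ℝ) =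
        δ + (Fintype.card F : ℝ) ^ ((n : ℝ) / 2) *
          ∑ j, γ j * Real.sin (n * θ j + φ j) := by
  classical
  have hq1 : 1 < Fintype.card F := Fintype.one_lt_card
  have hMM' : m.natDegree = 2 * ((m.natDegree - 2) / 2) + 2 := by
    obtain ⟨t, ht⟩ := hMeven; omega
  have hc0 : coeffSum χ 0 = 1 := by
    rw [coeffSum_eq, SD_zero, Finset.sum_singleton, hχ1]
  have hconv : ∀ n : ℕ, 1 ≤ n → ∑ k ∈ Finset.range (n+1),
      coeffSum χ k * coeffSum (fun f => polyMoebius f * χ f) (n - k) = 0 := by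
    intro n hn
    rw [convolution χ hχ1 hχmul n, if_neg (by omega)]
  have hev : ∀ x : ℂ, ∑ k ∈ Finset.range m.natDegree, ((coeffSum χ k : ℤ) : ℂ) * x ^ k =
      (1 - x) * ∏ j, (1 - 2 * (Real.sqrt (Fintype.card F) : ℂ) * (Real.cos (θ j) : ℂ) * x
        + ((Fintype.card F : ℕ) : ℂ) * x ^ 2) := by
    intro x
    have h := congrArg (Polynomial.aeval x) hfact
    simpa only [map_sum, map_mul, map_prod, map_sub, map_add, map_pow, map_one,
      Polynomial.aeval_C, Polynomial.aeval_X, Complex.coe_algebraMap,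
      Complex.ofReal_intCast, Complex.ofReal_mul, Complex.ofReal_ofNat,
      Complex.ofReal_natCast] using h
  exact main_aux hq1 hMM' (coeffSum χ) (coeffSum (fun f => polyMoebius f * χ f)) hc0
    θ hθinj hθmem hconv hvanish hev
end

section
/- Let F be a finite field with q elements, q odd, A = F[T], and let m = m_1 ⋯ m_r ∈ A be monic squarefree of degree M ≥ 3 with distinct monic irreducible factors m_i of degrees M_i. Let χ : A → ℤ be completely multiplicative with χ(f) = 0 whenever f is not coprime to m and χ(f)² = 1 whenever f is coprime to m, and set c(n) = ∑_{f monic, deg f = n} χ(f) and L = ∑_{n=0}^{M−1} c(n)·q^{−n/2}. Suppose θ_1, …, θ_{M'} ∈ (0, π) satisfy c(n) = 0 for n ≥ M and, as real polynomials, ∑_{n=0}^{M−1} c(n) X^n = ∏_{j=1}^{M'}(1 − 2√q·cos(θ_j)·X + q X²) with M' = (M−1)/2 if M is odd, respectively ∑_{n=0}^{M−1} c(n) X^n = (1 − X)·∏_{j=1}^{M'}(1 − 2√q·cos(θ_j)·X + q X²) with M' = (M−2)/2 if M is even. Set e_even = ½(∏_{j}(1 + cos θ_j) + ∏_{j}(1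 − cos θ_j)) and e_odd = ½(∏_{j}(1 + cos θ_j) − ∏_{j}(1 − cos θ_j)). Then (∏_{i=1}^{r}(1 − q^{−M_i}) / (2^{M'} ∏_{j=1}^{M'} sin²θ_j))·(e_even + e_odd) equals ∏_{i=1}^{r}(1 − q^{−M_i}) / L if M is odd, and equals (1 − q^{−1/2})·∏_{i=1}^{r}(1 − q^{−M_i}) / L if M is even. -/
open Polynomial
open scoped Classical

/-- `e_even`: the sum of the even-index elementary symmetric polynomials in
`cos θ_1, …, cos θ_d`, i.e. `½(∏(1 + cos θ_j) + ∏(1 − cos θ_j))`. -/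
noncomputable def eEven {d : ℕ} (θ : Fin d → ℝ) : ℝ :=
  ((∏ j, (1 + Real.cos (θ j))) + ∏ j, (1 - Real.cos (θ j))) / 2

/-- `e_odd`: the sum of the odd-index elementary symmetric polynomials in
`cos θ_1, …, cos θ_d`, i.e. `½(∏(1 + cos θ_j) − ∏(1 − cos θ_j))`. -/
noncomputable def eOdd {d : ℕ} (θ : Fin d → ℝ) : ℝ :=
  ((∏ j, (1 + Real.cos (θ j))) - ∏ j, (1 - Real.cos (θ j))) / 2

/-- The constant `C_m = ∏_{i=1}^r (1 − q^{−M_i}) / (2^{M'} ∏_{j=1}^{M'} sin² θ_j)`. -/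
noncomputable def biasConst {d r : ℕ} (q : ℕ) (Mi : Fin r → ℕ) (θ : Fin d → ℝ) : ℝ :=
  (∏ i, (1 - (q : ℝ) ^ (-(Mi i : ℤ)))) / (2 ^ d * ∏ j, Real.sin (θ j) ^ 2)

/-- (Bias constant and the central L-value.)
`C_m·(e_even + e_odd) = ∏_i(1 − q^{−M_i}) / ℒ(q^{−1/2}, χ)` for odd `M`, and
`C_m·(e_even + e_odd) = (1 − q^{−1/2})·∏_i(1 − q^{−M_i}) / ℒ(q^{−1/2}, χ)` for even `M`. -/
theorem biasConst_eq_central_L_value {F : Type*} [Field F] [Fintype F]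
    (hq : Odd (Fintype.card F))
    (r : ℕ) (mi : Fin r → Polynomial F) (hmonic : ∀ i, (mi i).Monic)
    (hirr : ∀ i, Irreducible (mi i)) (hinj : Function.Injective mi)
    (m : Polynomial F) (hm : m = ∏ i, mi i) (hM3 : 3 ≤ m.natDegree)
    (χ : Polynomial F → ℤ) (hχ1 : χ 1 = 1) (hχmul : ∀ f g, χ (f * g) = χ f * χ g)
    (hχ0 : ∀ f, ¬ IsCoprime f m → χ f = 0) (hχsq : ∀ f, IsCoprime f m → χ f ^ 2 = 1)
    (M' : ℕ) (θ : Fin M' → ℝ) (hθmem : ∀ j, θ j ∈ Set.Ioo 0 Real.pi)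
    (hvanish : ∀ n, m.natDegree ≤ n → coeffSum χ n = 0)
    (hcase :
      (Odd m.natDegree ∧ M' = (m.natDegree - 1) / 2 ∧
        (∑ n ∈ Finset.range m.natDegree,
            Polynomial.C ((coeffSum χ n : ℤ) : ℝ) * Polynomial.X ^ n) =
          ∏ j, (1 - Polynomial.C (2 * Real.sqrt (Fintype.card F) * Real.cos (θ j)) * Polynomial.X
            + Polynomial.C ((Fintype.card F : ℝ)) * Polynomial.X ^ 2)) ∨
      (Even m.natDegree ∧ M' = (m.natDegree - 2) / 2 ∧
        (∑ n ∈ Finset.range m.natDegree,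
            Polynomial.C ((coeffSum χ n : ℤ) : ℝ) * Polynomial.X ^ n) =
          (1 - Polynomial.X) *
            ∏ j, (1 - Polynomial.C (2 * Real.sqrt (Fintype.card F) * Real.cos (θ j)) *
              Polynomial.X + Polynomial.C ((Fintype.card F : ℝ)) * Polynomial.X ^ 2))) :
    biasConst (Fintype.card F) (fun i => (mi i).natDegree) θ * (eEven θ + eOdd θ) =
      (if Odd m.natDegree then (1 : ℝ) else 1 - (Real.sqrt (Fintype.card F))⁻¹) *
        (∏ i, (1 - (Fintype.card F : ℝ) ^ (-((mi i).natDegree : ℤ)))) /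
        (∑ n ∈ Finset.range m.natDegree,
          ((coeffSum χ n : ℤ) : ℝ) * (Fintype.card F : ℝ) ^ (-(n : ℝ) / 2)) := by
  simp only [biasConst, eEven, eOdd]
  set q := Fintype.card F with hqdef
  have hq1 : 1 < q := Fintype.one_lt_card
  have hq0 : (0:ℝ) ≤ (q:ℝ) := by positivity
  set s := Real.sqrt q with hsdef
  have hs1 : 1 < s := by
    rw [hsdef, show (1:ℝ) = Real.sqrt 1 by simp]
    exact Real.sqrt_lt_sqrt (by norm_num) (by exact_mod_cast hq1)
  have hs0 : 0 < s := by linarith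
  have hss : s * s = (q:ℝ) := Real.mul_self_sqrt hq0
  -- rewrite the L-sum as evaluation at s⁻¹
  have hLsum : (∑ n ∈ Finset.range m.natDegree, ((coeffSum χ n : ℤ) : ℝ) * (q:ℝ) ^ (-(n:ℝ)/2))
      = Polynomial.eval s⁻¹ (∑ n ∈ Finset.range m.natDegree,
          Polynomial.C ((coeffSum χ n : ℤ) : ℝ) * Polynomial.X ^ n) := by
    rw [Polynomial.eval_finset_sum]
    refine Finset.sum_congr rfl fun n _ => ?_
    simp only [eval_mul, eval_C, eval_pow, eval_X]
    congr 1
    rw [inv_pow, ← Real.rpow_natCast s n, hsdef, Real.sqrt_eq_rpow,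
      ← Real.rpow_mul hq0, ← Real.rpow_neg hq0]
    ring_nf
  -- evaluation of each quadratic factor at s⁻¹
  have hfac : ∀ j, Polynomial.eval s⁻¹
      (1 - Polynomial.C (2 * s * Real.cos (θ j)) * Polynomial.X
        + Polynomial.C ((q:ℝ)) * Polynomial.X ^ 2) = 2 * (1 - Real.cos (θ j)) := by
    intro j
    simp only [eval_add, eval_sub, eval_one, eval_mul, eval_C, eval_X, eval_pow]
    field_simp
    nlinarith [hss]
  have hprodeval : Polynomial.eval s⁻¹ (∏ j, (1 - Polynomial.C (2 * s * Real.cos (θ j)) *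
        Polynomial.X + Polynomial.C ((q:ℝ)) * Polynomial.X ^ 2))
      = 2 ^ M' * ∏ j, (1 - Real.cos (θ j)) := by
    rw [Polynomial.eval_prod]
    rw [Finset.prod_congr rfl fun j _ => hfac j, Finset.prod_mul_distrib]
    simp
  -- positivity facts
  have hposm : ∀ j, 0 < 1 - Real.cos (θ j) ∧ 0 < 1 + Real.cos (θ j) := by
    intro j
    obtain ⟨h1, h2⟩ := hθmem j
    have hsin : 0 < Real.sin (θ j) := Real.sin_pos_of_pos_of_lt_pi h1 h2
    have hsq : Real.sin (θ j) ^ 2 = (1 - Real.cos (θ j)) * (1 + Real.cos (θ j)) := by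
      nlinarith [Real.sin_sq_add_cos_sq (θ j)]
    have hle1 : Real.cos (θ j) ≤ 1 := Real.cos_le_one _
    have hge1 : -1 ≤ Real.cos (θ j) := Real.neg_one_le_cos _
    constructor <;> nlinarith [sq_nonneg (Real.sin (θ j))]
  have hD : 0 < ∏ j, (1 - Real.cos (θ j)) := Finset.prod_pos fun j _ => (hposm j).1
  have hE : 0 < ∏ j, (1 + Real.cos (θ j)) := Finset.prod_pos fun j _ => (hposm j).2
  have hsinprod : (∏ j, Real.sin (θ j) ^ 2)
      = (∏ j, (1 - Real.cos (θ j))) * ∏ j, (1 + Real.cos (θ j)) := by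
    rw [← Finset.prod_mul_distrib]
    refine Finset.prod_congr rfl fun j _ => ?_
    nlinarith [Real.sin_sq_add_cos_sq (θ j)]
  set P := ∏ i, (1 - (q : ℝ) ^ (-((mi i).natDegree : ℤ))) with hP
  set D := ∏ j, (1 - Real.cos (θ j)) with hDdef
  set E := ∏ j, (1 + Real.cos (θ j)) with hEdef
  rcases hcase with ⟨hodd, _, heq⟩ | ⟨heven, _, heq⟩
  · rw [if_pos hodd, hLsum, heq, hprodeval, hsinprod]
    field_simp
    ring
  · rw [if_neg (by simpa [Nat.not_odd_iff_even] using heven), hLsum, heq, hsinprod]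
    rw [Polynomial.eval_mul, hprodeval]
    have h1s : Polynomial.eval s⁻¹ (1 - Polynomial.X : ℝ[X]) = 1 - s⁻¹ := by simp
    rw [h1s]
    have hne : 1 - s⁻¹ ≠ 0 := by
      have : s⁻¹ < 1 := by
        rw [inv_lt_one_iff₀]; right; exact hs1
      linarith
    rw [mul_div_mul_left _ _ hne]
    field_simp
    ring
end

section
/- Let F be a finite field with q elements, q odd. Then for every a ∈ F and every integer n ≥ 1, ∑_{f} μ(f)·η(f(a)) = 0, where the sum runs over all monic polynomials f ∈ F[T] of degree n, η : F → ℤ is the quadratic character of F (η(0) = 0, η(x) = 1 if x is a nonzero square in F, η(x) = −1 otherwise), and f(a) denotes the evaluation of f at a. -/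
open Polynomial
open scoped Classical

/-- The quadratic character of a finite field `F`: `η(0) = 0`, `η(x) = 1` if `x` is a
nonzero square, and `η(x) = −1` otherwise. -/
noncomputable def quadChar (F : Type*) [Field F] (x : F) : ℤ :=
  if x = 0 then 0 else if IsSquare x then 1 else -1


section Aux
open UniqueFactorizationMonoid

variable {F : Type*} [Field F] [Fintype F]

lemma finite_natDegree_le (F : Type*) [Field F] [Fintype F] (n : ℕ) :
    {f : F[X] | f.natDegree ≤ n}.Finite := by
  apply Set.Finite.of_finite_image (f := fun f (i : Fin (n+1)) => f.coeff i)
    (Set.toFinite _)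
  intro f hf g hg h
  ext i
  rcases le_or_gt i n with hi | hi
  · exact congrFun h ⟨i, Nat.lt_succ_of_le hi⟩
  · rw [coeff_eq_zero_of_natDegree_lt (lt_of_le_of_lt hf hi),
      coeff_eq_zero_of_natDegree_lt (lt_of_le_of_lt hg hi)]

lemma finite_M (F : Type*) [Field F] [Fintype F] (n : ℕ) :
    {f : F[X] | f.Monic ∧ f.natDegree = n}.Finite :=
  (finite_natDegree_le F n).subset (fun _ hf => le_of_eq hf.2)

noncomputable def Mf (F : Type*) [Field F] [Fintype F] (n : ℕ) : Finset F[X] :=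
  (finite_M F n).toFinset

lemma mem_Mf {n : ℕ} {f : F[X]} : f ∈ Mf F n ↔ f.Monic ∧ f.natDegree = n := by
  simp [Mf, finite_M]

lemma quadChar_eq (x : F) : quadChar F x = quadraticChar F x := by
  rw [quadraticChar_apply, quadraticCharFun, quadChar]
  split_ifs <;> simp_all

lemma quadChar_mul (x y : F) : quadChar F (x * y) = quadChar F x * quadChar F y := by
  simp only [quadChar_eq, map_mul]

lemma sum_quadChar (hq : Odd (Fintype.card F)) : ∑ x : F, quadChar F x = 0 := by
  have h2 : ringChar F ≠ 2 := by
    intro h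
    have := FiniteField.even_card_of_char_two h
    rw [Nat.odd_iff] at hq
    omega
  simp only [quadChar_eq]
  exact quadraticChar_sum_zero h2

lemma T_zero (a : F) : ∑ f ∈ Mf F 0, quadChar F (f.eval a) = 1 := by
  have h : Mf F 0 = {1} := by
    ext f
    rw [mem_Mf, Finset.mem_singleton]
    constructor
    · rintro ⟨hm, hd⟩
      exact Polynomial.eq_one_of_monic_natDegree_zero hm hd
    · rintro rfl
      exact ⟨monic_one, natDegree_one⟩
  rw [h, Finset.sum_singleton]
  simp [quadChar]

lemma T_pos (a : F) (hq : Odd (Fintype.card F)) {j : ℕ} (hj : 1 ≤ j) :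
    ∑ f ∈ Mf F j, quadChar F (f.eval a) = 0 := by
  classical
  have key : ∑ f ∈ Mf F j, quadChar F (f.eval a)
      = ∑ p ∈ ((Mf F j).filter (fun g => g.eval a = 0)) ×ˢ (Finset.univ : Finset F),
          quadChar F p.2 := by
    refine Finset.sum_nbij' (i := fun f => (f - C (f.eval a), f.eval a))
      (j := fun p => p.1 + C p.2) ?_ ?_ ?_ ?_ ?_
    · intro f hf
      rw [mem_Mf] at hf
      obtain ⟨hm, hd⟩ := hf
      have hdeg0 : 0 < f.degree := by
        rw [degree_eq_natDegree hm.ne_zero, hd]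
        exact_mod_cast hj
      rw [Finset.mem_product, Finset.mem_filter, mem_Mf]
      refine ⟨⟨⟨?_, ?_⟩, by simp⟩, Finset.mem_univ _⟩
      · show (f - C (f.eval a)).Monic
        rw [sub_eq_add_neg, ← C_neg]
        exact hm.add_of_left (lt_of_le_of_lt degree_C_le hdeg0)
      · show (f - C (f.eval a)).natDegree = j
        rw [sub_eq_add_neg, ← C_neg, natDegree_add_C, hd]
    · intro p hp
      rw [Finset.mem_product, Finset.mem_filter, mem_Mf] at hp
      obtain ⟨⟨⟨hm, hd⟩, _⟩, _⟩ := hp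
      have hdeg0 : 0 < p.1.degree := by
        rw [degree_eq_natDegree hm.ne_zero, hd]
        exact_mod_cast hj
      rw [mem_Mf]
      exact ⟨hm.add_of_left (lt_of_le_of_lt degree_C_le hdeg0),
        by rw [natDegree_add_C, hd]⟩
    · intro f _
      simp
    · intro p hp
      rw [Finset.mem_product, Finset.mem_filter, mem_Mf] at hp
      obtain ⟨⟨⟨_, _⟩, hz⟩, _⟩ := hp
      simp [hz]
    · intro f _
      simp
  rw [key, Finset.sum_product]
  simp [sum_quadChar hq]

/-- The finset of monic divisors of `f`. -/
noncomputable def Dv (f : F[X]) : Finset F[X] :=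
  (finite_natDegree_le F f.natDegree).toFinset.filter (fun g => g.Monic ∧ g ∣ f)

lemma mem_Dv {f g : F[X]} (hf : f ≠ 0) : g ∈ Dv f ↔ g.Monic ∧ g ∣ f := by
  simp only [Dv, Finset.mem_filter, Set.Finite.mem_toFinset, Set.mem_setOf_eq,
    and_iff_right_iff_imp]
  exact fun h => natDegree_le_of_dvd h.2 hf

lemma monic_of_mem_nf {f p : F[X]} (hp : p ∈ normalizedFactors f) : p.Monic := by
  have h0 : p ≠ 0 := (prime_of_normalized_factor p hp).ne_zero
  rw [← normalize_normalized_factor p hp]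
  exact monic_normalize h0

lemma card_factors_eq {g : F[X]} :
    Multiset.card (factors g) = Multiset.card (normalizedFactors g) := by
  rw [normalizedFactors, Multiset.card_map]

lemma nf_prod_finset {S : Finset F[X]} (hS : ∀ p ∈ S, Prime p ∧ normalize p = p) :
    normalizedFactors (∏ p ∈ S, p) = S.val := by
  rw [Finset.prod_eq_multiset_prod, Multiset.map_id',
    normalizedFactors_prod_eq _ (fun p hp => (hS p hp).1.irreducible)]
  rw [Multiset.map_congr rfl (fun p hp => (hS p hp).2), Multiset.map_id']

lemma squarefree_prod_finset {S : Finset F[X]} (hS : ∀ p ∈ S, Prime p ∧ normalize p = p) :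
    Squarefree (∏ p ∈ S, p) := by
  have h0 : (∏ p ∈ S, p) ≠ 0 := Finset.prod_ne_zero_iff.mpr fun p hp => (hS p hp).1.ne_zero
  rw [squarefree_iff_nodup_normalizedFactors h0, nf_prod_finset hS]
  exact S.nodup

lemma moebius_div_sum {f : F[X]} (hf : f.Monic) (hd : 1 ≤ f.natDegree) :
    ∑ g ∈ Dv f, polyMoebius g = 0 := by
  classical
  have hf0 : f ≠ 0 := hf.ne_zero
  set P : Finset F[X] := (normalizedFactors f).toFinset with hP
  have hPmem : ∀ p ∈ P, p ∈ normalizedFactors f := fun p hp => Multiset.mem_toFinset.mp hp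
  have hprime : ∀ p ∈ P, Prime p ∧ normalize p = p := fun p hp =>
    ⟨prime_of_normalized_factor p (hPmem p hp), normalize_normalized_factor p (hPmem p hp)⟩
  have hstep : ∑ g ∈ Dv f, polyMoebius g
      = ∑ g ∈ (Dv f).filter Squarefree, polyMoebius g := by
    refine (Finset.sum_filter_of_ne ?_).symm
    intro g _ hg
    by_contra hsq
    exact hg (by rw [polyMoebius, if_neg hsq])
  rw [hstep]
  have hbij : ∑ g ∈ (Dv f).filter Squarefree, polyMoebius g
      = ∑ S ∈ P.powerset, (-1 : ℤ) ^ S.card := by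
    refine Finset.sum_nbij' (i := fun g => (normalizedFactors g).toFinset)
      (j := fun S => ∏ p ∈ S, p) ?_ ?_ ?_ ?_ ?_
    · intro g hg
      rw [Finset.mem_filter, mem_Dv hf0] at hg
      obtain ⟨⟨hgm, hgd⟩, _⟩ := hg
      rw [Finset.mem_powerset]
      intro p hp
      rw [Multiset.mem_toFinset] at hp ⊢
      exact Multiset.mem_of_le
        ((dvd_iff_normalizedFactors_le_normalizedFactors hgm.ne_zero hf0).mp hgd) hp
    · intro S hS
      rw [Finset.mem_powerset] at hS
      have hSp : ∀ p ∈ S, Prime p ∧ normalize p = p := fun p hp => hprime p (hS hp)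
      rw [Finset.mem_filter, mem_Dv hf0]
      refine ⟨⟨monic_prod_of_monic _ _ (fun p hp => monic_of_mem_nf (hPmem p (hS hp))), ?_⟩,
        squarefree_prod_finset hSp⟩
      have hle : S.val ≤ normalizedFactors f := by
        rw [Multiset.le_iff_count]
        intro p
        by_cases h : p ∈ S
        · rw [Multiset.count_eq_one_of_mem S.nodup h]
          exact Multiset.count_pos.mpr (hPmem p (hS h))
        · simp [Multiset.count_eq_zero_of_notMem h]
      calc (∏ p ∈ S, p) = S.val.prod := by rw [Finset.prod_eq_multiset_prod, Multiset.map_id']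
        _ ∣ (normalizedFactors f).prod := Multiset.prod_dvd_prod_of_le hle
        _ ∣ f := (prod_normalizedFactors hf0).dvd
    · intro g hg
      rw [Finset.mem_filter, mem_Dv hf0] at hg
      obtain ⟨⟨hgm, _⟩, hsq⟩ := hg
      have hg0 : g ≠ 0 := hgm.ne_zero
      have hnd : (normalizedFactors g).Nodup :=
        (squarefree_iff_nodup_normalizedFactors hg0).mp hsq
      have : ∏ p ∈ (normalizedFactors g).toFinset, p = (normalizedFactors g).prod := by
        rw [Finset.prod_eq_multiset_prod, Multiset.map_id', Multiset.toFinset_val,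
          hnd.dedup]
      show ∏ p ∈ (normalizedFactors g).toFinset, p = g
      rw [this]
      refine eq_of_monic_of_associated ?_ hgm (prod_normalizedFactors hg0)
      exact monic_multiset_prod_of_monic _ _
        (fun p hp => monic_normalize (prime_of_factor p hp).ne_zero)
    · intro S hS
      rw [Finset.mem_powerset] at hS
      have hSp : ∀ p ∈ S, Prime p ∧ normalize p = p := fun p hp => hprime p (hS hp)
      show (normalizedFactors (∏ p ∈ S, p)).toFinset = S
      rw [nf_prod_finset hSp, Finset.val_toFinset]
    · intro g hg
      rw [Finset.mem_filter, mem_Dv hf0] at hg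
      obtain ⟨⟨hgm, _⟩, hsq⟩ := hg
      have hg0 : g ≠ 0 := hgm.ne_zero
      have hnd : (normalizedFactors g).Nodup :=
        (squarefree_iff_nodup_normalizedFactors hg0).mp hsq
      rw [polyMoebius, if_pos hsq, card_factors_eq, Multiset.toFinset_card_of_nodup hnd]
  rw [hbij]
  apply Finset.sum_powerset_neg_one_pow_card_of_nonempty
  rw [Finset.nonempty_iff_ne_empty]
  intro h
  rw [hP, Multiset.toFinset_eq_empty] at h
  have : IsUnit f := by
    have := prod_normalizedFactors hf0
    rw [h, Multiset.prod_zero] at this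
    exact this.isUnit isUnit_one
  have := natDegree_eq_zero_of_isUnit this
  omega

lemma muBias_aux (hq : Odd (Fintype.card F)) (a : F) (n : ℕ) (hn : 1 ≤ n) :
    ∑ f ∈ Mf F n, polyMoebius f * quadChar F (f.eval a) = 0 := by
  classical
  have hzero : ∑ p ∈ (Mf F n).sigma (fun f => Dv f),
      polyMoebius p.2 * quadChar F (p.1.eval a) = 0 := by
    rw [Finset.sum_sigma]
    refine Finset.sum_eq_zero fun f hf => ?_
    show ∑ g ∈ Dv f, polyMoebius g * quadChar F (f.eval a) = 0
    rw [mem_Mf] at hf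
    rw [← Finset.sum_mul, moebius_div_sum hf.1 (hf.2 ▸ hn), zero_mul]
  have hsig : ∑ p ∈ (Mf F n).sigma (fun f => Dv f),
        polyMoebius p.2 * quadChar F (p.1.eval a)
      = ∑ p ∈ (Finset.range (n+1)).sigma (fun k => (Mf F k) ×ˢ (Mf F (n-k))),
        polyMoebius p.2.1 * quadChar F (p.2.1.eval a) * quadChar F (p.2.2.eval a) := by
    refine Finset.sum_nbij' (i := fun p => ⟨p.2.natDegree, (p.2, p.1 /ₘ p.2)⟩)
      (j := fun p => ⟨p.2.1 * p.2.2, p.2.1⟩) ?_ ?_ ?_ ?_ ?_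
    · rintro ⟨f, g⟩ hp
      dsimp only
      rw [Finset.mem_sigma] at hp
      dsimp only at hp
      obtain ⟨hf, hg⟩ := hp
      rw [mem_Mf] at hf
      rw [mem_Dv hf.1.ne_zero] at hg
      obtain ⟨hgm, hgd⟩ := hg
      have hmul : g * (f /ₘ g) = f := by
        have := modByMonic_add_div f g
        rwa [(modByMonic_eq_zero_iff_dvd hgm).mpr hgd, zero_add] at this
      have hqm : (f /ₘ g).Monic := hgm.of_mul_monic_left (by rw [hmul]; exact hf.1)
      rw [Finset.mem_sigma, Finset.mem_product]
      refine ⟨?_, mem_Mf.mpr ⟨hgm, rfl⟩, mem_Mf.mpr ⟨hqm, ?_⟩⟩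
      · show g.natDegree ∈ Finset.range (n+1)
        rw [Finset.mem_range]
        have h4 := natDegree_le_of_dvd hgd hf.1.ne_zero
        have h5 := hf.2
        omega
      · show (f /ₘ g).natDegree = n - g.natDegree
        have h2 : f.natDegree = g.natDegree + (f /ₘ g).natDegree := by
          conv_lhs => rw [← hmul]
          exact natDegree_mul hgm.ne_zero hqm.ne_zero
        have h3 := hf.2
        omega
    · rintro ⟨k, g, h⟩ hp
      dsimp only
      rw [Finset.mem_sigma, Finset.mem_product] at hp
      dsimp only at hp
      obtain ⟨hk, hg, hh⟩ := hp
      rw [mem_Mf] at hg hh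
      rw [Finset.mem_range] at hk
      rw [Finset.mem_sigma]
      constructor
      · rw [mem_Mf]
        refine ⟨hg.1.mul hh.1, ?_⟩
        rw [natDegree_mul hg.1.ne_zero hh.1.ne_zero, hg.2, hh.2]
        omega
      · rw [mem_Dv (hg.1.mul hh.1).ne_zero]
        exact ⟨hg.1, dvd_mul_right _ _⟩
    · rintro ⟨f, g⟩ hp
      rw [Finset.mem_sigma] at hp
      dsimp only at hp
      obtain ⟨hf, hg⟩ := hp
      rw [mem_Mf] at hf
      rw [mem_Dv hf.1.ne_zero] at hg
      have hmul : g * (f /ₘ g) = f := by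
        have := modByMonic_add_div f g
        rwa [(modByMonic_eq_zero_iff_dvd hg.1).mpr hg.2, zero_add] at this
      show (⟨g * (f /ₘ g), g⟩ : Σ _ : F[X], F[X]) = ⟨f, g⟩
      rw [hmul]
    · rintro ⟨k, g, h⟩ hp
      rw [Finset.mem_sigma, Finset.mem_product] at hp
      dsimp only at hp
      obtain ⟨hk, hg, hh⟩ := hp
      rw [mem_Mf] at hg
      show (⟨g.natDegree, (g, g * h /ₘ g)⟩ : Σ _ : ℕ, F[X] × F[X]) = ⟨k, (g, h)⟩
      rw [mul_divByMonic_cancel_left h hg.1, hg.2]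
    · rintro ⟨f, g⟩ hp
      rw [Finset.mem_sigma] at hp
      dsimp only at hp
      obtain ⟨hf, hg⟩ := hp
      rw [mem_Mf] at hf
      rw [mem_Dv hf.1.ne_zero] at hg
      have hmul : g * (f /ₘ g) = f := by
        have := modByMonic_add_div f g
        rwa [(modByMonic_eq_zero_iff_dvd hg.1).mpr hg.2, zero_add] at this
      show polyMoebius g * quadChar F (f.eval a)
        = polyMoebius g * quadChar F (g.eval a) * quadChar F ((f /ₘ g).eval a)
      rw [mul_assoc, ← quadChar_mul, ← eval_mul, hmul]
  rw [hsig, Finset.sum_sigma] at hzero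
  have hsplit : ∀ k ∈ Finset.range (n+1),
      ∑ p ∈ (Mf F k) ×ˢ (Mf F (n-k)),
        polyMoebius p.1 * quadChar F (p.1.eval a) * quadChar F (p.2.eval a)
      = (∑ g ∈ Mf F k, polyMoebius g * quadChar F (g.eval a))
        * ∑ h ∈ Mf F (n-k), quadChar F (h.eval a) := by
    intro k _
    rw [Finset.sum_product, Finset.sum_mul]
    exact Finset.sum_congr rfl fun g _ => by rw [Finset.mul_sum]
  rw [Finset.sum_congr rfl hsplit] at hzero
  rw [Finset.sum_eq_single_of_mem n (Finset.self_mem_range_succ n)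
    (fun k hk hkn => by
      rw [T_pos a hq (by rw [Finset.mem_range] at hk; omega), mul_zero])] at hzero
  rw [Nat.sub_self, T_zero a, mul_one] at hzero
  exact hzero

end Aux

/-- For `q` odd, `a ∈ F` and `n ≥ 1`, the μ-bias for the quadratic
character modulo the linear polynomial `T − a` vanishes:
`∑_{f monic, deg f = n} μ(f)·η(f(a)) = 0`. -/
theorem muBias_degree_one_modulus {F : Type*} [Field F] [Fintype F]
    (hq : Odd (Fintype.card F)) (a : F) (n : ℕ) (hn : 1 ≤ n) :
    ∑ᶠ f ∈ {f : Polynomial F | f.Monic ∧ f.natDegree = n},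
      polyMoebius f * quadChar F (f.eval a) = 0 := by
  rw [finsum_mem_eq_finite_toFinset_sum _ (finite_M F n)]
  exact muBias_aux hq a n hn
end
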